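/- arXiv:1101.2705 — 3 statements merged into one kernel-verified Lean document; each statement's English description precedes it below -/
import Mathlib

section
/- For any h, k ≥ 2, every deterministic thrifty k-way branching program solving the Tree Evaluation Problem on the complete binary tree of height h has at least k^h states. -/
/-- A deterministic `k`-way branching program with variables `Var` and outputs `Out`.
States are either query states (labeled by `query`, with `k` out-edges given by `next`)
or output states (where `out` is `some o`). -/
structure BP (Var : Type) (k : ℕ) (Out : Type) where
  State : Type
  [finState : Fintype State]
  start : State
  query : State → Var
  next : State → Fin k → State
  out : State → Option Out

namespace BP

variable {Var Out : Type} {k : ℕ}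

/-- The number of states. -/
noncomputable def size (B : BP Var k Out) : ℕ := @Fintype.card B.State B.finState

/-- The computation path of input `I`. -/
def path (B : BP Var k Out) (I : Var → Fin k) : ℕ → B.State
  | 0 => B.start
  | t + 1 => B.next (B.path I t) (I (B.query (B.path I t)))

/-- The computation of `I` is still running at time `t`: no output state was reached earlier. -/
def VisitsAt (B : BP Var k Out) (I : Var → Fin k) (t : ℕ) : Prop :=
  ∀ s < t, B.out (B.path I s) = none

/-- State `q` is on the computation path of input `I`. -/
def Visits (B : BP Var k Out) (I : Var → Fin k) (q : B.State) : Prop :=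
  ∃ t, B.VisitsAt I t ∧ B.path I t = q

/-- `B` computes the function `g`. -/
def Computes (B : BP Var k Out) (g : (Var → Fin k) → Out) : Prop :=
  ∀ I, ∃ t, B.VisitsAt I t ∧ B.out (B.path I t) = some (g I)

end BP
/-- A connected rooted dag: nodes `Fin n`, with `child v u` meaning there is an arc from `v`
to `u` (so `v` is a child of `u`).  The relation is well-founded (the dag is acyclic), the
root is the unique node of out-degree `0` (every other node has a parent, which also makes
the dag connected). -/
structure RootedDag where
  n : ℕ
  child : Fin n → Fin n → Prop
  wf : WellFounded child
  root : Fin n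
  root_no_parent : ∀ u, ¬ child root u
  root_unique : ∀ u, u ≠ root → ∃ w, child u w

namespace RootedDag

/-- A leaf is a node of in-degree `0`. -/
def IsLeaf (G : RootedDag) (u : Fin G.n) : Prop := ∀ v, ¬ G.child v u

/-- The input variables of the dag evaluation problem `DE^G_k`: a leaf variable `l_u` for each
leaf `u`, and a variable `f_u(a⃗)` for each internal node `u` and each assignment `a⃗` of values
in `[k]` to the children of `u`. -/
def Var (G : RootedDag) (k : ℕ) : Type :=
  {u : Fin G.n // G.IsLeaf u} ⊕
    (Σ _u : {u : Fin G.n // ¬ G.IsLeaf u}, ({v : Fin G.n // G.child v _u.1} → Fin k))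

/-- The value of each node of `G` under input `I`: leaves take their `l` value, and an internal
node applies its function to the values of its children. -/
noncomputable def val (G : RootedDag) {k : ℕ} (I : G.Var k → Fin k) : Fin G.n → Fin k :=
  WellFounded.fix (C := fun _ => Fin k) G.wf fun u ih =>
    letI := Classical.dec (G.IsLeaf u)
    if h : G.IsLeaf u then I (Sum.inl ⟨u, h⟩)
    else I (Sum.inr ⟨⟨u, h⟩, fun v => ih v.1 v.2⟩)

/-- `B` solves `DE^G_k`: on every input it halts with output `true` iff the value of the
root is `1` (the first element of `[k]`). -/
def SolvesDE (G : RootedDag) {k : ℕ} (hk : 0 < k) (B : BP (G.Var k) k Bool) : Prop :=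
  B.Computes fun I => decide (G.val I G.root = ⟨0, hk⟩)

/-- `B` is thrifty: whenever a state querying `f_u(a⃗)` is visited by input `I`, then `a⃗` is
exactly the tuple of values of the children of `u` under `I`. -/
def Thrifty (G : RootedDag) {k : ℕ} (B : BP (G.Var k) k Bool) : Prop :=
  ∀ (I : G.Var k → Fin k) (q : B.State) (u : {u : Fin G.n // ¬ G.IsLeaf u})
    (a : {v : Fin G.n // G.child v u.1} → Fin k),
    B.Visits I q → B.query q = Sum.inr ⟨u, a⟩ → ∀ v, a v = G.val I v.1

end RootedDag

attribute [local instance] Classical.propDecidable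
set_option linter.unusedSectionVars false




namespace TEP

/-- `q` is a descendant of `p` at depth `< m`, in 1-indexed heap positions. -/
def InSub (m p q : ℕ) : Prop := ∃ d, d < m ∧ p * 2 ^ d ≤ q ∧ q < (p + 1) * 2 ^ d

lemma insub_self {m : ℕ} (hm : 0 < m) (p : ℕ) : InSub m p p :=
  ⟨0, hm, by omega, by omega⟩

lemma insub_up {m p q c : ℕ} (hc : c = 2 * p ∨ c = 2 * p + 1)
    (hq : InSub m c q) : InSub (m + 1) p q := by
  obtain ⟨d, hd, h1, h2⟩ := hq
  refine ⟨d + 1, by omega, ?_, ?_⟩ <;> rw [pow_succ] <;> rcases hc with rfl | rfl <;> nlinarith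

lemma insub_div {p q d : ℕ} (h1 : p * 2 ^ d ≤ q) (h2 : q < (p + 1) * 2 ^ d) :
    q / 2 ^ d = p := Nat.div_eq_of_lt_le h1 (by omega)

lemma insub_disj {m m' p q : ℕ} (hp : 1 ≤ p)
    (h1 : InSub m (2 * p) q) (h2 : InSub m' (2 * p + 1) q) : False := by
  obtain ⟨d, _, hd1, hd2⟩ := h1
  obtain ⟨e, _, he1, he2⟩ := h2
  have hdq : q / 2 ^ d = 2 * p := insub_div hd1 hd2
  have heq : q / 2 ^ e = 2 * p + 1 := insub_div he1 he2
  rcases le_or_gt d e with hde | hde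
  · have hpow : (2:ℕ) ^ d * 2 ^ (e - d) = 2 ^ e := by
      rw [← pow_add]; congr 1; omega
    have : q / 2 ^ e = (q / 2 ^ d) / 2 ^ (e - d) := by
      rw [Nat.div_div_eq_div_mul, hpow]
    rw [this, hdq] at heq
    rcases Nat.eq_zero_or_pos (e - d) with h0 | h0
    · rw [h0, pow_zero, Nat.div_one] at heq; omega
    · have h2e : 2 ≤ 2 ^ (e - d) := by
        calc 2 = 2 ^ 1 := rfl
        _ ≤ 2 ^ (e - d) := Nat.pow_le_pow_right (by omega) (by omega)
      have hle : 2 * p / 2 ^ (e - d) ≤ 2 * p / 2 :=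
        Nat.div_le_div_left h2e (by omega)
      have h3 : 2 * p / 2 = p := by omega
      omega
  · have hpow : (2:ℕ) ^ e * 2 ^ (d - e) = 2 ^ d := by
      rw [← pow_add]; congr 1; omega
    have : q / 2 ^ d = (q / 2 ^ e) / 2 ^ (d - e) := by
      rw [Nat.div_div_eq_div_mul, hpow]
    rw [this, heq] at hdq
    have h2e : 2 ≤ 2 ^ (d - e) := by
      calc 2 = 2 ^ 1 := rfl
      _ ≤ 2 ^ (d - e) := Nat.pow_le_pow_right (by omega) (by omega)
    have hle : (2 * p + 1) / 2 ^ (d - e) ≤ (2 * p + 1) / 2 :=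
      Nat.div_le_div_left h2e (by omega)
    have h3 : (2 * p + 1) / 2 = p := by omega
    omega

end TEP

namespace TEP
open RootedDag

attribute [local instance] Classical.propDecidable

/-- plain descendant relation on 1-indexed heap positions -/
def Desc (p q : ℕ) : Prop := ∃ d, p * 2 ^ d ≤ q ∧ q < (p + 1) * 2 ^ d

lemma desc_refl (p : ℕ) : Desc p p := ⟨0, by omega, by omega⟩

lemma desc_le {p q : ℕ} (h : Desc p q) : p ≤ q := by
  obtain ⟨d, h1, h2⟩ := h
  have : 1 ≤ 2 ^ d := Nat.one_le_two_pow
  nlinarith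

lemma desc_trans {p q r : ℕ} (h1 : Desc p q) (h2 : Desc q r) : Desc p r := by
  obtain ⟨d, hd1, hd2⟩ := h1
  obtain ⟨e, he1, he2⟩ := h2
  refine ⟨d + e, ?_, ?_⟩ <;> rw [pow_add]
  · calc p * (2 ^ d * 2 ^ e) = (p * 2 ^ d) * 2 ^ e := by ring
    _ ≤ q * 2 ^ e := Nat.mul_le_mul_right _ hd1
    _ ≤ r := he1
  · calc r < (q + 1) * 2 ^ e := he2
    _ ≤ ((p + 1) * 2 ^ d) * 2 ^ e := Nat.mul_le_mul_right _ (by omega)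
    _ = (p + 1) * (2 ^ d * 2 ^ e) := by ring

variable {k : ℕ} {G : RootedDag}

/-- the node tagging a variable -/
def nodeOf : G.Var k → Fin G.n := Sum.elim (fun l => l.1) (fun s => s.1.1)

/-- the thrifty variable of a node -/
noncomputable def thriftyVar (G : RootedDag) {k : ℕ} (I : G.Var k → Fin k) (u : Fin G.n) :
    G.Var k :=
  if hu : G.IsLeaf u then Sum.inl ⟨u, hu⟩
  else Sum.inr ⟨⟨u, hu⟩, fun v => G.val I v.1⟩

lemma nodeOf_inl (l : {u : Fin G.n // G.IsLeaf u}) :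
    nodeOf (Sum.inl l : G.Var k) = l.1 := rfl

lemma nodeOf_inr (w : {u : Fin G.n // ¬ G.IsLeaf u})
    (a : {v : Fin G.n // G.child v w.1} → Fin k) :
    nodeOf (Sum.inr ⟨w, a⟩ : G.Var k) = w.1 := rfl

lemma thriftyVar_pos (I : G.Var k → Fin k) {u : Fin G.n} (hu : G.IsLeaf u) :
    thriftyVar G I u = Sum.inl ⟨u, hu⟩ := dif_pos hu

lemma thriftyVar_neg (I : G.Var k → Fin k) {u : Fin G.n} (hu : ¬ G.IsLeaf u) :
    thriftyVar G I u = Sum.inr ⟨⟨u, hu⟩, fun v => G.val I v.1⟩ := dif_neg hu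

lemma nodeOf_thriftyVar (I : G.Var k → Fin k) (u : Fin G.n) :
    nodeOf (thriftyVar G I u) = u := by
  by_cases hu : G.IsLeaf u
  · rw [thriftyVar_pos I hu]; rfl
  · rw [thriftyVar_neg I hu]; rfl

lemma val_leaf (I : G.Var k → Fin k) {u : Fin G.n} (hu : G.IsLeaf u) :
    G.val I u = I (Sum.inl ⟨u, hu⟩) := by
  rw [RootedDag.val, WellFounded.fix_eq]
  exact dif_pos hu

lemma val_node (I : G.Var k → Fin k) {u : Fin G.n} (hu : ¬ G.IsLeaf u) :
    G.val I u = I (Sum.inr ⟨⟨u, hu⟩, fun v => G.val I v.1⟩) := by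
  conv_lhs => rw [RootedDag.val, WellFounded.fix_eq]
  exact dif_neg hu

lemma val_thrifty (I : G.Var k → Fin k) (u : Fin G.n) :
    G.val I u = I (thriftyVar G I u) := by
  by_cases hu : G.IsLeaf u
  · rw [thriftyVar_pos I hu]; exact val_leaf I hu
  · rw [thriftyVar_neg I hu]; exact val_node I hu

section ctx

variable {h : ℕ} (hh : 2 ≤ h) (hn : G.n = 2 ^ h - 1)
  (hchild : ∀ v u : Fin G.n, G.child v u ↔
      ((v : ℕ) = 2 * (u : ℕ) + 1 ∨ (v : ℕ) = 2 * (u : ℕ) + 2))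

include hh hn hchild

lemma isLeaf_iff (u : Fin G.n) : G.IsLeaf u ↔ 2 ^ h ≤ 2 * ((u : ℕ) + 1) := by
  have hpow : 1 ≤ 2 ^ h := Nat.one_le_two_pow
  constructor
  · intro hu
    by_contra hcon
    have hlt : 2 * (u : ℕ) + 1 < G.n := by omega
    exact hu ⟨2 * (u : ℕ) + 1, hlt⟩ ((hchild _ _).2 (Or.inl rfl))
  · intro hge v hv
    have := (hchild v u).1 hv
    have := v.2
    omega

lemma children_lt {u : Fin G.n} (hu : ¬ G.IsLeaf u) :
    2 * (u : ℕ) + 2 < G.n := by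
  have hpow : 1 ≤ 2 ^ h := Nat.one_le_two_pow
  rw [isLeaf_iff hh hn hchild] at hu
  have hpar : 2 ^ h % 2 = 0 := by
    have : (2:ℕ) ^ h = 2 ^ (h - 1) * 2 := by
      rw [← pow_succ]; congr 1; omega
    omega
  omega

lemma desc_child {v u : Fin G.n} (hv : G.child v u) :
    Desc ((u : ℕ) + 1) ((v : ℕ) + 1) := by
  have := (hchild v u).1 hv
  exact ⟨1, by omega, by omega⟩

lemma not_desc_child {v u : Fin G.n} (hv : G.child v u) :
    ¬ Desc ((v : ℕ) + 1) ((u : ℕ) + 1) := by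
  intro hd
  have := desc_le hd
  have := (hchild v u).1 hv
  omega

lemma val_congr (I I' : G.Var k → Fin k) :
    ∀ u : Fin G.n,
      (∀ x : G.Var k, Desc ((u : ℕ) + 1) ((nodeOf x : ℕ) + 1) → I x = I' x) →
      G.val I u = G.val I' u := by
  have key : ∀ N, ∀ u : Fin G.n, G.n - (u : ℕ) ≤ N →
      (∀ x : G.Var k, Desc ((u : ℕ) + 1) ((nodeOf x : ℕ) + 1) → I x = I' x) →
      G.val I u = G.val I' u := by
    intro N
    induction N with
    | zero => intro u hu _; have := u.2; omega
    | succ N ih =>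
      intro u hN hag
      by_cases hu : G.IsLeaf u
      · rw [val_leaf I hu, val_leaf I' hu]
        exact hag (Sum.inl ⟨u, hu⟩) (desc_refl _)
      · rw [val_node I hu, val_node I' hu]
        have hch : (fun v : {v : Fin G.n // G.child v u} => G.val I v.1) =
            (fun v : {v : Fin G.n // G.child v u} => G.val I' v.1) := by
          funext v
          refine ih v.1 ?_ ?_
          · have := (hchild v.1 u).1 v.2
            have := v.1.2
            omega
          · intro x hx
            exact hag x (desc_trans (desc_child hh hn hchild v.2) hx)
        rw [hch]
        exact hag (Sum.inr ⟨⟨u, hu⟩, fun v => G.val I' v.1⟩) (desc_refl _)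
  exact fun u => key (G.n - (u : ℕ)) u le_rfl

end ctx

lemma path_agree {Var : Type} {k : ℕ} {Out : Type} (B : BP Var k Out)
    (I I' : Var → Fin k) (t : ℕ)
    (hag : ∀ s, s < t → I (B.query (B.path I s)) = I' (B.query (B.path I s))) :
    ∀ s, s ≤ t → B.path I' s = B.path I s := by
  intro s
  induction s with
  | zero => intro _; rfl
  | succ s ih =>
    intro hs
    have h1 := ih (by omega)
    show B.next (B.path I' s) (I' (B.query (B.path I' s))) = _
    rw [h1, ← hag s (by omega)]
    rfl

end TEP


namespace TEP2
open TEP Finset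

lemma pebLB_aux (hgt : ℕ) (C : ℕ → Finset ℕ) (m p tstar bb c c' : ℕ)
    (hp : 1 ≤ p) (hm : 1 ≤ m)
    (hcc : (c = 2 * p ∧ c' = 2 * p + 1) ∨ (c = 2 * p + 1 ∧ c' = 2 * p))
    (IH : ∀ p' a' b', 1 ≤ p' → 2 ^ hgt ≤ p' * 2 ^ m → (p' + 1) * 2 ^ m ≤ 2 ^ (hgt + 1) →
      a' ≤ b' → (∀ q, InSub m p' q → q ∉ C a') → p' ∈ C b' →
      ∃ τ, a' ≤ τ ∧ τ ≤ b' ∧ m ≤ ((C τ).filter (InSub m p')).card)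
    (h2 : (p + 1) * 2 ^ (m + 1) ≤ 2 ^ (hgt + 1)) (h1 : 2 ^ hgt ≤ p * 2 ^ (m + 1))
    (hempty : ∀ q, InSub m c q → q ∉ C tstar) (hcin : c ∈ C bb) (htb : tstar ≤ bb)
    (hne : ∀ t, tstar < t → t ≤ bb → ∃ q, InSub m c' q ∧ q ∈ C t) :
    ∃ τ, tstar ≤ τ ∧ τ ≤ bb ∧
      m + 1 ≤ ((C τ).filter (fun q => InSub m (2*p) q ∨ InSub m (2*p+1) q)).card := by
  have hEx : ∃ t, tstar ≤ t ∧ t ≤ bb ∧ c ∈ C t := ⟨bb, htb, le_rfl, hcin⟩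
  set b2 := Nat.find hEx with hb2def
  obtain ⟨hb2a, hb2b, hb2c⟩ := Nat.find_spec hEx
  have hcc0 : c ∉ C tstar := hempty c (insub_self hm c)
  have hb2gt : tstar < b2 := by
    rcases lt_or_eq_of_le hb2a with h | h
    · exact h
    · exact absurd (h ▸ hb2c) hcc0
  have key1 : p * 2 ^ (m + 1) = 2 * p * 2 ^ m := by rw [pow_succ]; ring
  have key2 : (p + 1) * 2 ^ (m + 1) = (2 * p + 2) * 2 ^ m := by rw [pow_succ]; ring
  have hcle : 2 * p ≤ c ∧ c + 1 ≤ 2 * p + 2 := by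
    rcases hcc with ⟨rfl, _⟩ | ⟨rfl, _⟩ <;> omega
  have hg1 : 2 ^ hgt ≤ c * 2 ^ m :=
    le_trans (key1 ▸ h1) (Nat.mul_le_mul_right _ hcle.1)
  have hg2 : (c + 1) * 2 ^ m ≤ 2 ^ (hgt + 1) :=
    le_trans (Nat.mul_le_mul_right _ hcle.2) (key2 ▸ h2)
  have hcIH := IH c tstar b2 (by omega) hg1 hg2 hb2a hempty hb2c
  obtain ⟨τ, hτ1, hτ2, hcard⟩ := hcIH
  have hτgt : tstar < τ := by
    rcases lt_or_eq_of_le hτ1 with h | h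
    · exact h
    · exfalso
      have : (C τ).filter (InSub m c) = ∅ := by
        rw [Finset.eq_empty_iff_forall_notMem]
        intro q hq
        rw [Finset.mem_filter] at hq
        exact hempty q hq.2 (h ▸ hq.1)
      rw [this] at hcard; simp at hcard; omega
  have hτbb : τ ≤ bb := le_trans hτ2 hb2b
  obtain ⟨q', hq'sub, hq'in⟩ := hne τ hτgt hτbb
  have hq'notin : q' ∉ (C τ).filter (InSub m c) := by
    rw [Finset.mem_filter]
    rintro ⟨-, hq'c⟩
    rcases hcc with ⟨rfl, rfl⟩ | ⟨rfl, rfl⟩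
    · exact insub_disj hp hq'c hq'sub
    · exact insub_disj hp hq'sub hq'c
  refine ⟨τ, le_of_lt hτgt, hτbb, ?_⟩
  have hsub : insert q' ((C τ).filter (InSub m c)) ⊆
      (C τ).filter (fun q => InSub m (2*p) q ∨ InSub m (2*p+1) q) := by
    intro x hx
    rw [Finset.mem_insert] at hx
    rcases hx with rfl | hx
    · rw [Finset.mem_filter]
      refine ⟨hq'in, ?_⟩
      rcases hcc with ⟨_, rfl⟩ | ⟨_, rfl⟩
      · exact Or.inr hq'sub
      · exact Or.inl hq'sub
    · rw [Finset.mem_filter] at hx ⊢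
      refine ⟨hx.1, ?_⟩
      rcases hcc with ⟨rfl, _⟩ | ⟨rfl, _⟩
      · exact Or.inl hx.2
      · exact Or.inr hx.2
  have hcards := Finset.card_le_card hsub
  rw [Finset.card_insert_of_notMem hq'notin] at hcards
  omega

lemma pebLB (hgt : ℕ) (C : ℕ → Finset ℕ)
    (hleg : ∀ t q, q ∈ C (t + 1) → q ∉ C t → 2 * q < 2 ^ hgt →
      (2 * q ∈ C t ∧ (2 * q + 1) ∈ C t)) :
    ∀ m p a b, 1 ≤ p → 2 ^ hgt ≤ p * 2 ^ m → (p + 1) * 2 ^ m ≤ 2 ^ (hgt + 1) → a ≤ b →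
      (∀ q, InSub m p q → q ∉ C a) → p ∈ C b →
      ∃ τ, a ≤ τ ∧ τ ≤ b ∧ m ≤ ((C τ).filter (InSub m p)).card := by
  intro m
  induction m with
  | zero =>
    intro p a b _ _ _ hab _ _
    exact ⟨a, le_rfl, hab, by omega⟩
  | succ m IH =>
    intro p a b hp hA hB hab hempty hpb
    rcases Nat.eq_zero_or_pos m with rfl | hm
    · refine ⟨b, hab, le_rfl, ?_⟩
      have hmem : p ∈ (C b).filter (InSub (0 + 1) p) :=
        Finset.mem_filter.2 ⟨hpb, insub_self (by omega) p⟩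
      exact Finset.card_pos.2 ⟨p, hmem⟩
    · have hEx : ∃ t, a ≤ t ∧ p ∈ C t := ⟨b, hab, hpb⟩
      obtain ⟨ha0, hp0⟩ := Nat.find_spec hEx
      set b0 := Nat.find hEx with hb0def
      have hb0b : b0 ≤ b := Nat.find_le ⟨hab, hpb⟩
      have hane : p ∉ C a := hempty p (insub_self (by omega) p)
      have hab0 : a < b0 := by
        rcases lt_or_eq_of_le ha0 with h | h
        · exact h
        · exact absurd (h ▸ hp0) hane
      have hnotprev : p ∉ C (b0 - 1) := by
        intro hcon
        exact Nat.find_min hEx (show b0 - 1 < b0 by omega) ⟨by omega, hcon⟩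
      have hhalf : (p + 1) * 2 ^ m ≤ 2 ^ hgt := by
        have e1 : (p + 1) * 2 ^ (m + 1) = ((p + 1) * 2 ^ m) * 2 := by rw [pow_succ]; ring
        have e2 : (2:ℕ) ^ (hgt + 1) = 2 ^ hgt * 2 := pow_succ 2 hgt
        omega
      have h2m : 2 ≤ 2 ^ m := by
        calc (2:ℕ) = 2 ^ 1 := rfl
        _ ≤ 2 ^ m := Nat.pow_le_pow_right (by omega) hm
      have hp2 : 2 * p < 2 ^ hgt := by nlinarith
      have hch := hleg (b0 - 1) p (by rw [show b0 - 1 + 1 = b0 by omega]; exact hp0) hnotprev hp2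
      set P : ℕ → Prop := fun t => a ≤ t ∧
        ((∀ q, InSub m (2 * p) q → q ∉ C t) ∨ (∀ q, InSub m (2 * p + 1) q → q ∉ C t)) with hPdef
      have hPa : P a := ⟨le_rfl, Or.inl fun q hq => hempty q (insub_up (Or.inl rfl) hq)⟩
      have habb : a ≤ b0 - 1 := by omega
      set ts := Nat.findGreatest P (b0 - 1) with htsdef
      have hPts : P ts := Nat.findGreatest_spec habb hPa
      have hts_le : ts ≤ b0 - 1 := Nat.findGreatest_le _
      have hts_ge : a ≤ ts := hPts.1
      have hgr : ∀ t, ts < t → t ≤ b0 - 1 → ¬ P t := by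
        intro t h1t h2t
        exact (Nat.findGreatest_eq_iff.1 htsdef.symm).2.2 h1t h2t
      have hne2 : ∀ t, ts < t → t ≤ b0 - 1 →
          (∃ q, InSub m (2 * p) q ∧ q ∈ C t) ∧ (∃ q, InSub m (2 * p + 1) q ∧ q ∈ C t) := by
        intro t h1t h2t
        have hnP := hgr t h1t h2t
        have hor : ¬((∀ q, InSub m (2 * p) q → q ∉ C t) ∨
            (∀ q, InSub m (2 * p + 1) q → q ∉ C t)) := by
          intro hco
          exact hnP ⟨by omega, hco⟩
        push_neg at hor
        obtain ⟨⟨q1, hq1, hq1'⟩, ⟨q2, hq2, hq2'⟩⟩ := hor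
        exact ⟨⟨q1, hq1, hq1'⟩, ⟨q2, hq2, hq2'⟩⟩
      have haux : ∃ τ, ts ≤ τ ∧ τ ≤ b0 - 1 ∧
          m + 1 ≤ ((C τ).filter (fun q => InSub m (2*p) q ∨ InSub m (2*p+1) q)).card := by
        rcases hPts.2 with hcase | hcase
        · exact pebLB_aux hgt C m p ts (b0 - 1) (2 * p) (2 * p + 1) hp hm
            (Or.inl ⟨rfl, rfl⟩) IH hB hA hcase hch.1 hts_le
            (fun t h1t h2t => (hne2 t h1t h2t).2)
        · exact pebLB_aux hgt C m p ts (b0 - 1) (2 * p + 1) (2 * p) hp hm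
            (Or.inr ⟨rfl, rfl⟩) IH hB hA hcase hch.2 hts_le
            (fun t h1t h2t => (hne2 t h1t h2t).1)
      obtain ⟨τ, hτ1, hτ2, hcard⟩ := haux
      refine ⟨τ, le_trans hts_ge hτ1, by omega, ?_⟩
      refine le_trans hcard (Finset.card_le_card ?_)
      intro x hx
      rw [Finset.mem_filter] at hx ⊢
      refine ⟨hx.1, ?_⟩
      rcases hx.2 with hx2 | hx2
      · exact insub_up (Or.inl rfl) hx2
      · exact insub_up (Or.inr rfl) hx2

end TEP2

namespace TEP
open RootedDag

section main

variable {h k : ℕ} {G : RootedDag}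

/-- `I` queries the thrifty variable of `u` at time `t` (before halting time `T`). -/
def QryAt (B : BP (G.Var k) k Bool) (I : G.Var k → Fin k) (T : ℕ) (u : Fin G.n) (t : ℕ) :
    Prop :=
  t < T ∧ B.query (B.path I t) = thriftyVar G I u

/-- the value of `u` is used at time `t`. -/
def UseAt (B : BP (G.Var k) k Bool) (I : G.Var k → Fin k) (T : ℕ) (u : Fin G.n) (t : ℕ) :
    Prop :=
  (∃ p, G.child u p ∧ QryAt B I T p t) ∨ (u = G.root ∧ t = T)

/-- node `u` carries a pebble at time `t`. -/
def InPeb (B : BP (G.Var k) k Bool) (I : G.Var k → Fin k) (T : ℕ) (t : ℕ) (u : Fin G.n) :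
    Prop :=
  (∃ t1, t1 < t ∧ QryAt B I T u t1) ∧
    ∃ t2, t ≤ t2 ∧ UseAt B I T u t2 ∧ ∀ s, t ≤ s → s < t2 → ¬ QryAt B I T u s

variable (B : BP (G.Var k) k Bool) (I : G.Var k → Fin k) (T : ℕ)

lemma query_thrifty (hthrifty : G.Thrifty B) (hTvis : B.VisitsAt I T)
    {t : ℕ} (ht : t ≤ T) {w : {u : Fin G.n // ¬ G.IsLeaf u}}
    {a : {v : Fin G.n // G.child v w.1} → Fin k}
    (hq : B.query (B.path I t) = Sum.inr ⟨w, a⟩) :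
    B.query (B.path I t) = thriftyVar G I w.1 ∧ a = fun v => G.val I v.1 := by
  have hvis : B.Visits I (B.path I t) := ⟨t, fun s hs => hTvis s (by omega), rfl⟩
  have ha : a = fun v => G.val I v.1 := funext (hthrifty I _ w a hvis hq)
  refine ⟨?_, ha⟩
  rw [hq, ha, thriftyVar_neg _ w.2]

variable (hh : 2 ≤ h) (hk : 2 ≤ k) (hn : G.n = 2 ^ h - 1) (hroot : (G.root : ℕ) = 0)
  (hchild : ∀ v u : Fin G.n, G.child v u ↔
      ((v : ℕ) = 2 * (u : ℕ) + 1 ∨ (v : ℕ) = 2 * (u : ℕ) + 2))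
  (hthrifty : G.Thrifty B)

include hh hk hn hchild hthrifty in
lemma child_before (hTvis : B.VisitsAt I T)
    {t : ℕ} (ht : t < T) {u v : Fin G.n} (hv : G.child v u)
    (hq : B.query (B.path I t) = thriftyVar G I u) :
    ∃ s, s < t ∧ B.query (B.path I s) = thriftyVar G I v := by
  by_contra hcon
  push_neg at hcon
  set x := thriftyVar G I v with hxdef
  set c : Fin k := if G.val I v = (⟨0, by omega⟩ : Fin k) then ⟨1, by omega⟩
    else ⟨0, by omega⟩ with hcdef
  have hcne : c ≠ G.val I v := by
    rw [hcdef]; split_ifs with h0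
    · rw [h0]; intro hcon2
      have := congrArg Fin.val hcon2
      simp at this
    · intro hcon2; exact h0 hcon2.symm
  set I' := Function.update I x c with hI'def
  have hpa : ∀ s, s ≤ t → B.path I' s = B.path I s := by
    refine path_agree B I I' t (fun s hs => ?_)
    rw [hI'def]
    exact (Function.update_of_ne (hcon s hs) c I).symm
  have hvalv : G.val I' v = c := by
    by_cases hlf : G.IsLeaf v
    · have hx : x = Sum.inl ⟨v, hlf⟩ := by rw [hxdef, thriftyVar_pos _ hlf]
      rw [val_leaf I' hlf, ← hx, hI'def, Function.update_self]
    · have hcv : ∀ w : {w : Fin G.n // G.child w v}, G.val I' w.1 = G.val I w.1 := by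
        intro w
        refine val_congr hh hn hchild I' I w.1 (fun y hy => ?_)
        by_cases hyx : y = x
        · exfalso
          have hnd : nodeOf y = v := by rw [hyx, hxdef]; exact nodeOf_thriftyVar I v
          rw [hnd] at hy
          exact not_desc_child hh hn hchild w.2 hy
        · rw [hI'def, Function.update_of_ne hyx]
      have hx2 : x = Sum.inr ⟨⟨v, hlf⟩, fun w => G.val I' w.1⟩ := by
        rw [hxdef, thriftyVar_neg _ hlf]
        congr 1
        refine congrArg (Sigma.mk _) ?_
        funext w
        exact (hcv w).symm
      rw [val_node I' hlf, ← hx2, hI'def, Function.update_self]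
  have hu_nl : ¬ G.IsLeaf u := fun hl => hl v hv
  have hq' : B.query (B.path I' t) =
      Sum.inr ⟨⟨u, hu_nl⟩, fun w : {w : Fin G.n // G.child w u} => G.val I w.1⟩ := by
    rw [hpa t le_rfl, hq, thriftyVar_neg _ hu_nl]
  have hvis' : B.Visits I' (B.path I' t) := by
    refine ⟨t, fun s hs => ?_, rfl⟩
    rw [hpa s (by omega)]
    exact hTvis s (by omega)
  have hthis := hthrifty I' _ ⟨u, hu_nl⟩ _ hvis' hq' ⟨v, hv⟩
  dsimp at hthis
  rw [hvalv] at hthis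
  exact hcne hthis.symm

include hh hk hn hroot hchild hthrifty in
lemma root_query (hk0 : 0 < k)
    (hsolve : G.SolvesDE hk0 B) (hTvis : B.VisitsAt I T)
    (hTout : B.out (B.path I T) = some (decide (G.val I G.root = ⟨0, hk0⟩))) :
    ∃ t, t < T ∧ B.query (B.path I t) = thriftyVar G I G.root := by
  by_contra hcon
  push_neg at hcon
  set x := thriftyVar G I G.root with hxdef
  have hroot_nl : ¬ G.IsLeaf G.root := by
    rw [isLeaf_iff hh hn hchild]
    have : (4:ℕ) ≤ 2 ^ h := by
      calc (4:ℕ) = 2 ^ 2 := rfl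
      _ ≤ 2 ^ h := Nat.pow_le_pow_right (by omega) hh
    omega
  set c : Fin k := if G.val I G.root = (⟨0, hk0⟩ : Fin k) then ⟨1, by omega⟩
    else ⟨0, hk0⟩ with hcdef
  set I' := Function.update I x c with hI'def
  have hpa : ∀ s, s ≤ T → B.path I' s = B.path I s := by
    refine path_agree B I I' T (fun s hs => ?_)
    rw [hI'def]
    exact (Function.update_of_ne (hcon s hs) c I).symm
  have hvalr : G.val I' G.root = c := by
    have hcv : ∀ w : {w : Fin G.n // G.child w G.root}, G.val I' w.1 = G.val I w.1 := by
      intro w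
      refine val_congr hh hn hchild I' I w.1 (fun y hy => ?_)
      by_cases hyx : y = x
      · exfalso
        have hnd : nodeOf y = G.root := by rw [hyx, hxdef]; exact nodeOf_thriftyVar I G.root
        rw [hnd] at hy
        exact not_desc_child hh hn hchild w.2 hy
      · rw [hI'def, Function.update_of_ne hyx]
    have hx2 : x = Sum.inr ⟨⟨G.root, hroot_nl⟩, fun w => G.val I' w.1⟩ := by
      rw [hxdef, thriftyVar_neg _ hroot_nl]
      congr 1
      refine congrArg (Sigma.mk _) ?_
      funext w
      exact (hcv w).symm
    rw [val_node I' hroot_nl, ← hx2, hI'def, Function.update_self]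
  obtain ⟨t', hvis', hout'⟩ := hsolve I'
  have hvisT' : B.VisitsAt I' T := by
    intro s hs
    rw [hpa s (by omega)]
    exact hTvis s hs
  have houtT' : B.out (B.path I' T) = some (decide (G.val I G.root = ⟨0, hk0⟩)) := by
    rw [hpa T le_rfl]; exact hTout
  have ht'T : t' = T := by
    rcases lt_trichotomy t' T with hlt | heq | hgt
    · have := hvisT' t' hlt
      rw [this] at hout'
      exact absurd hout' (by simp)
    · exact heq
    · have := hvis' T hgt
      rw [this] at houtT'
      exact absurd houtT' (by simp)
  rw [ht'T, houtT'] at hout'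
  have hdec : decide (G.val I G.root = (⟨0, hk0⟩ : Fin k)) =
      decide (G.val I' G.root = (⟨0, hk0⟩ : Fin k)) := by
    injection hout'
  rw [hvalr, hcdef] at hdec
  by_cases h0 : G.val I G.root = (⟨0, hk0⟩ : Fin k)
  · rw [if_pos h0] at hdec
    rw [decide_eq_true h0] at hdec
    have : (⟨1, by omega⟩ : Fin k) ≠ ⟨0, hk0⟩ := by
      intro hcon2
      have := congrArg Fin.val hcon2
      simp at this
    rw [decide_eq_false this] at hdec
    exact absurd hdec (by simp)
  · rw [if_neg h0] at hdec
    rw [decide_eq_false h0] at hdec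
    rw [decide_eq_true rfl] at hdec
    exact absurd hdec (by simp)

include hh hk hn hchild hthrifty in
lemma placement (hTvis : B.VisitsAt I T) {t : ℕ} {u : Fin G.n}
    (hin : InPeb B I T (t + 1) u) (hout : ¬ InPeb B I T t u) :
    QryAt B I T u t ∧ ∀ v, G.child v u → InPeb B I T t v := by
  obtain ⟨⟨t1, ht1, hq1⟩, t2, ht2, huse, hnoq⟩ := hin
  have hqt : QryAt B I T u t := by
    by_contra hnq
    refine hout ⟨⟨t1, ?_, hq1⟩, t2, by omega, huse, fun s hs1 hs2 => ?_⟩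
    · rcases Nat.lt_succ_iff_lt_or_eq.1 ht1 with hlt | heq
      · exact hlt
      · exact absurd (heq ▸ hq1) hnq
    · rcases Nat.eq_or_lt_of_le hs1 with heq | hlt
      · exact heq ▸ hnq
      · exact hnoq s hlt hs2
  refine ⟨hqt, fun v hv => ?_⟩
  obtain ⟨s, hs, hqs⟩ := child_before B I T hh hk hn hchild hthrifty hTvis hqt.1 hv hqt.2
  exact ⟨⟨s, hs, hqt.1.trans' hs |> fun h' => ⟨h', hqs⟩⟩, t, le_rfl,
    Or.inl ⟨u, hv, hqt⟩, fun s' hs1 hs2 => by omega⟩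

end main
end TEP


namespace TEP
open RootedDag Finset

section bottleneck

variable {h k : ℕ} {G : RootedDag}
  (B : BP (G.Var k) k Bool)
  (hh : 2 ≤ h) (hk : 2 ≤ k) (hn : G.n = 2 ^ h - 1) (hroot : (G.root : ℕ) = 0)
  (hchild : ∀ v u : Fin G.n, G.child v u ↔
      ((v : ℕ) = 2 * (u : ℕ) + 1 ∨ (v : ℕ) = 2 * (u : ℕ) + 2))
  (hthrifty : G.Thrifty B)

include hh hk hn hroot hchild hthrifty in
lemma exists_bottleneck (hk0 : 0 < k) (hsolve : G.SolvesDE hk0 B) (I : G.Var k → Fin k) :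
    ∃ (τ T : ℕ) (S : Finset (Fin G.n)),
      B.VisitsAt I T ∧ (B.out (B.path I T)).isSome ∧ τ ≤ T ∧ S.card = h ∧
      ∀ u ∈ S, ∃ (p : Fin G.n) (t2 : ℕ), G.child u p ∧ τ ≤ t2 ∧ t2 < T ∧
        B.query (B.path I t2) = thriftyVar G I p ∧
        ∀ s, τ ≤ s → s < t2 → B.query (B.path I s) ≠ thriftyVar G I u := by
  obtain ⟨T, hTvis, hTout⟩ := hsolve I
  set Peb : ℕ → Finset (Fin G.n) := fun t => Finset.univ.filter (InPeb B I T t) with hPeb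
  set Cs : ℕ → Finset ℕ := fun t => (Peb t).image (fun u : Fin G.n => (u : ℕ) + 1) with hCs
  have hpow4 : 4 ≤ 2 ^ h := by
    calc (4:ℕ) = 2 ^ 2 := rfl
    _ ≤ 2 ^ h := Nat.pow_le_pow_right (by omega) hh
  obtain ⟨t0, ht0, hq0⟩ :=
    root_query B I T hh hk hn hroot hchild hthrifty hk0 hsolve hTvis hTout
  have hrootPeb : InPeb B I T T G.root :=
    ⟨⟨t0, ht0, ht0, hq0⟩, T, le_rfl, Or.inr ⟨rfl, rfl⟩, fun s hs1 hs2 => by omega⟩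
  have hmemC : ∀ t (q : ℕ), q ∈ Cs t ↔ ∃ u : Fin G.n, InPeb B I T t u ∧ (u : ℕ) + 1 = q := by
    intro t q
    rw [hCs]
    simp only [Finset.mem_image, Finset.mem_filter, Finset.mem_univ, true_and, hPeb]
  have hleg : ∀ t q, q ∈ Cs (t + 1) → q ∉ Cs t → 2 * q < 2 ^ h →
      (2 * q ∈ Cs t ∧ (2 * q + 1) ∈ Cs t) := by
    intro t q hq1 hq2 hq3
    obtain ⟨u, huin, hu2⟩ := (hmemC _ _).1 hq1
    have hunot : ¬ InPeb B I T t u := fun hcon => hq2 ((hmemC _ _).2 ⟨u, hcon, hu2⟩)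
    obtain ⟨hqt, hchildren⟩ := placement B I T hh hk hn hchild hthrifty hTvis huin hunot
    have hu_nl : ¬ G.IsLeaf u := by
      rw [isLeaf_iff hh hn hchild]
      omega
    have h2 := children_lt hh hn hchild hu_nl
    have hv1 : (⟨2 * (u : ℕ) + 1, by omega⟩ : Fin G.n) ∈ Peb t := by
      rw [hPeb, Finset.mem_filter]
      exact ⟨Finset.mem_univ _, hchildren _ ((hchild _ _).2 (Or.inl rfl))⟩
    have hv2 : (⟨2 * (u : ℕ) + 2, by omega⟩ : Fin G.n) ∈ Peb t := by
      rw [hPeb, Finset.mem_filter]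
      exact ⟨Finset.mem_univ _, hchildren _ ((hchild _ _).2 (Or.inr rfl))⟩
    constructor
    · refine (hmemC _ _).2 ⟨⟨2 * (u : ℕ) + 1, by omega⟩, ?_, by simp; omega⟩
      exact (Finset.mem_filter.1 hv1).2
    · refine (hmemC _ _).2 ⟨⟨2 * (u : ℕ) + 2, by omega⟩, ?_, by simp; omega⟩
      exact (Finset.mem_filter.1 hv2).2
  obtain ⟨m, hm⟩ : ∃ m, h = m + 1 := ⟨h - 1, by omega⟩
  have hm1 : 1 ≤ m := by omega
  have hempty0 : ∀ q', q' ∉ Cs 0 := by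
    intro q' hq'
    obtain ⟨u, hu1, -⟩ := (hmemC _ _).1 hq'
    obtain ⟨⟨t1, ht1, -⟩, -⟩ := hu1
    omega
  have hrootC : 1 ∈ Cs T := (hmemC _ _).2 ⟨G.root, hrootPeb, by rw [hroot]⟩
  -- first time the root is pebbled
  have hEx : ∃ t, 1 ∈ Cs t := ⟨T, hrootC⟩
  set b0 := Nat.find hEx with hb0def
  have hp0 : 1 ∈ Cs b0 := Nat.find_spec hEx
  have hb0T : b0 ≤ T := Nat.find_le hrootC
  have h0b0 : 0 < b0 := by
    rcases Nat.eq_zero_or_pos b0 with h0 | h0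
    · exact absurd (h0 ▸ hp0) (hempty0 1)
    · exact h0
  have hnotprev : 1 ∉ Cs (b0 - 1) := fun hcon =>
    Nat.find_min hEx (show b0 - 1 < b0 by omega) hcon
  have hch := hleg (b0 - 1) 1 (by rw [show b0 - 1 + 1 = b0 by omega]; exact hp0) hnotprev
    (by omega)
  set P : ℕ → Prop := fun t =>
    ((∀ q, InSub m 2 q → q ∉ Cs t) ∨ (∀ q, InSub m 3 q → q ∉ Cs t)) with hPdef
  have hPa : P 0 := Or.inl fun q _ => hempty0 q
  set ts := Nat.findGreatest P (b0 - 1) with htsdef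
  have hPts : P ts := Nat.findGreatest_spec (Nat.zero_le _) hPa
  have hts_le : ts ≤ b0 - 1 := Nat.findGreatest_le _
  have hgr : ∀ t, ts < t → t ≤ b0 - 1 → ¬ P t := by
    intro t h1t h2t
    exact (Nat.findGreatest_eq_iff.1 htsdef.symm).2.2 h1t h2t
  have hne2 : ∀ t, ts < t → t ≤ b0 - 1 →
      (∃ q, InSub m 2 q ∧ q ∈ Cs t) ∧ (∃ q, InSub m 3 q ∧ q ∈ Cs t) := by
    intro t h1t h2t
    have hnP := hgr t h1t h2t
    have hor : ¬((∀ q, InSub m 2 q → q ∉ Cs t) ∨ (∀ q, InSub m 3 q → q ∉ Cs t)) :=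
      fun hco => hnP hco
    push_neg at hor
    obtain ⟨⟨q1, hq1, hq1'⟩, ⟨q2, hq2, hq2'⟩⟩ := hor
    exact ⟨⟨q1, hq1, hq1'⟩, ⟨q2, hq2, hq2'⟩⟩
  have hIH := TEP2.pebLB h Cs hleg m
  have haux : ∃ τ, ts ≤ τ ∧ τ ≤ b0 - 1 ∧
      m + 1 ≤ ((Cs τ).filter (fun q => InSub m (2 * 1) q ∨ InSub m (2 * 1 + 1) q)).card := by
    have h23 : (2 : ℕ) = 2 * 1 ∧ (3 : ℕ) = 2 * 1 + 1 := by omega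
    rcases hPts with hcase | hcase
    · refine TEP2.pebLB_aux h Cs m 1 ts (b0 - 1) 2 3 le_rfl hm1 (Or.inl ⟨by omega, by omega⟩)
        hIH ?_ ?_ hcase hch.1 hts_le (fun t h1t h2t => (hne2 t h1t h2t).2)
      · rw [show m + 1 = h by omega]; omega
      · rw [show m + 1 = h by omega]
        have : (2:ℕ) ^ (h + 1) = 2 ^ h * 2 := pow_succ 2 h
        omega
    · refine TEP2.pebLB_aux h Cs m 1 ts (b0 - 1) 3 2 le_rfl hm1 (Or.inr ⟨by omega, by omega⟩)
        hIH ?_ ?_ hcase hch.2 hts_le (fun t h1t h2t => (hne2 t h1t h2t).1)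
      · rw [show m + 1 = h by omega]; omega
      · rw [show m + 1 = h by omega]
        have : (2:ℕ) ^ (h + 1) = 2 ^ h * 2 := pow_succ 2 h
        omega
  obtain ⟨τ, hτ1, hτ2, hcard⟩ := haux
  have hτT : τ ≤ T := by omega
  set Sb := (Cs τ).filter (fun q => InSub m (2 * 1) q ∨ InSub m (2 * 1 + 1) q) with hSbdef
  have hSb_ge2 : ∀ q ∈ Sb, 2 ≤ q := by
    intro q hq
    rw [hSbdef, Finset.mem_filter] at hq
    rcases hq.2 with ⟨d, -, hd1, -⟩ | ⟨d, -, hd1, -⟩ <;>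
      [skip; skip] <;>
      · have : 1 ≤ 2 ^ d := Nat.one_le_two_pow
        nlinarith
  set S₂ := (Peb τ).filter (fun u => u ≠ G.root) with hS₂def
  have hinj : Function.Injective (fun u : Fin G.n => (u : ℕ) + 1) := by
    intro a b hab
    simp only at hab
    exact Fin.ext (by omega)
  have hsub2 : Sb ⊆ S₂.image (fun u : Fin G.n => (u : ℕ) + 1) := by
    intro q hq
    have hq2 := hSb_ge2 q hq
    rw [hSbdef, Finset.mem_filter] at hq
    obtain ⟨u, hu1, hu2⟩ := (hmemC _ _).1 hq.1
    refine Finset.mem_image.2 ⟨u, ?_, hu2⟩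
    rw [hS₂def, Finset.mem_filter]
    refine ⟨by rw [hPeb, Finset.mem_filter]; exact ⟨Finset.mem_univ _, hu1⟩, ?_⟩
    intro hcon
    rw [hcon, hroot] at hu2
    omega
  have hS₂card : h ≤ S₂.card := by
    have h1 : Sb.card ≤ (S₂.image (fun u : Fin G.n => (u : ℕ) + 1)).card :=
      Finset.card_le_card hsub2
    rw [Finset.card_image_of_injective _ hinj] at h1
    omega
  obtain ⟨S, hS_sub, hS_card⟩ := Finset.exists_subset_card_eq hS₂card
  refine ⟨τ, T, S, hTvis, by rw [hTout]; rfl, hτT, hS_card, ?_⟩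
  intro u huS
  have huS₂ := hS_sub huS
  rw [hS₂def, Finset.mem_filter] at huS₂
  obtain ⟨huPeb, hune⟩ := huS₂
  rw [hPeb, Finset.mem_filter] at huPeb
  obtain ⟨-, ⟨-, t2, ht2, huse, hnoq⟩⟩ := huPeb
  rcases huse with ⟨p, hup, hqp⟩ | ⟨hurt, -⟩
  · obtain ⟨hpt2T, hqp2⟩ := hqp
    refine ⟨p, t2, hup, ht2, hpt2T, hqp2, fun s hs1 hs2 hq => ?_⟩
    exact hnoq s hs1 hs2 ⟨by omega, hq⟩
  · exact absurd hurt hune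

end bottleneck
end TEP

/-- For any `h, k ≥ 2`, every deterministic thrifty `k`-way branching program solving the
Tree Evaluation Problem on the complete binary tree of height `h` (with `2^h - 1` nodes in
heap order) has at least `k^h` states. -/
theorem stmt9 (h k : ℕ) (hh : 2 ≤ h) (hk : 2 ≤ k)
    (G : RootedDag) (hn : G.n = 2 ^ h - 1) (hroot : (G.root : ℕ) = 0)
    (hchild : ∀ v u : Fin G.n, G.child v u ↔
      ((v : ℕ) = 2 * (u : ℕ) + 1 ∨ (v : ℕ) = 2 * (u : ℕ) + 2))
    (B : BP (G.Var k) k Bool)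
    (hsolve : G.SolvesDE (by omega) B) (hthrifty : G.Thrifty B) :
    k ^ h ≤ B.size := by
  classical
  have hk0 : 0 < k := by omega
  have hbn := fun I => TEP.exists_bottleneck B hh hk hn hroot hchild hthrifty (by omega) hsolve I
  choose τf Tf Sf hvis hsome hτT hcard huse using hbn
  set crit : (G.Var k → Fin k) → G.Var k → Prop := fun I x =>
    TEP.nodeOf x ∈ Sf I ∧ x = TEP.thriftyVar G I (TEP.nodeOf x) with hcritdef
  set K : (G.Var k → Fin k) → (Fin h → Fin k) → G.Var k → Fin k := fun I c x =>
    if hx : crit I x then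
      c (((Sf I).orderIsoOfFin (hcard I)).symm ⟨TEP.nodeOf x, hx.1⟩)
    else I x with hKdef
  have hKneg : ∀ I c x, ¬ crit I x → K I c x = I x := fun I c x hx => dif_neg hx
  have hKpos : ∀ I c u (hu : u ∈ Sf I), K I c (TEP.thriftyVar G I u) =
      c (((Sf I).orderIsoOfFin (hcard I)).symm ⟨u, hu⟩) := by
    intro I c u hu
    have hcr : crit I (TEP.thriftyVar G I u) := by
      refine ⟨?_, ?_⟩ <;> rw [TEP.nodeOf_thriftyVar]
      exact hu
    rw [hKdef]
    simp only
    rw [dif_pos hcr]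
    congr 1
    congr 1
    exact Subtype.ext (TEP.nodeOf_thriftyVar I u)
  set F : (Fin h → Fin k) × (G.Var k → Fin k) → B.State × (G.Var k → Fin k) :=
    fun p => (B.path p.2 (τf p.2), K p.2 p.1) with hFdef
  have hFinj : Function.Injective F := by
    rintro ⟨c, I⟩ ⟨c', I'⟩ heq
    simp only [hFdef, Prod.mk.injEq] at heq
    obtain ⟨hq, hK⟩ := heq
    set L : ℕ := Tf I - τf I with hLdef
    set L' : ℕ := Tf I' - τf I' with hL'def
    have hvisle : ∀ t ≤ Tf I, B.VisitsAt I t := fun t ht s hs => hvis I s (by omega)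
    have hvisle' : ∀ t ≤ Tf I', B.VisitsAt I' t := fun t ht s hs => hvis I' s (by omega)
    have hτTI : τf I ≤ Tf I := hτT I
    have hτTI' : τf I' ≤ Tf I' := hτT I'
    have halign : ∀ s, s ≤ min L L' → B.path I (τf I + s) = B.path I' (τf I' + s) := by
      intro s
      induction s using Nat.strong_induction_on with
      | _ s ih =>
        intro hs
        cases s with
        | zero => exact hq
        | succ s =>
          have hpe : ∀ j, j ≤ s → B.path I (τf I + j) = B.path I' (τf I' + j) :=
            fun j hj => ih j (by omega) (by omega)
          have hsmin : s < min L L' := by omega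
          have hrec : ∀ j, j ≤ s → ∀ (w : {u : Fin G.n // ¬ G.IsLeaf u})
              (a : {v : Fin G.n // G.child v w.1} → Fin k),
              B.query (B.path I (τf I + j)) = Sum.inr ⟨w, a⟩ →
              (∀ v, a v = G.val I v.1) ∧ (∀ v, a v = G.val I' v.1) := by
            intro j hj w a hqj
            have h1 := hthrifty I _ w a ⟨τf I + j, hvisle _ (by omega), rfl⟩ hqj
            have hqj' : B.query (B.path I' (τf I' + j)) = Sum.inr ⟨w, a⟩ := by
              rw [← hpe j hj]; exact hqj
            have h2 := hthrifty I' _ w a ⟨τf I' + j, hvisle' _ (by omega), rfl⟩ hqj'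
            exact ⟨h1, h2⟩
          have hcrit1 : ∀ u : Fin G.n, u ∈ Sf I →
              B.query (B.path I (τf I + s)) = TEP.thriftyVar G I u →
              G.val I u = G.val I' u := by
            intro u huS hqu
            obtain ⟨p, t2, hup, ht2a, ht2b, hqp, hnoq⟩ := huse I u huS
            have hge : t2 ≤ τf I + s := by
              by_contra hlt
              exact hnoq (τf I + s) (by omega) (by omega) hqu
            have ht2eq : t2 = τf I + (t2 - τf I) := by omega
            set s2 := t2 - τf I with hs2def
            have hs2lt : s2 < s := by
              rcases Nat.lt_or_ge s2 s with h' | h'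
              · exact h'
              · exfalso
                have hseq : s2 = s := by omega
                rw [ht2eq, hseq] at hqp
                rw [hqp] at hqu
                have hnd := congrArg TEP.nodeOf hqu
                rw [TEP.nodeOf_thriftyVar, TEP.nodeOf_thriftyVar] at hnd
                have hcc := (hchild u p).1 hup
                rw [hnd] at hcc
                omega
            have hp_nl : ¬ G.IsLeaf p := fun hl => hl u hup
            have hqp2 : B.query (B.path I (τf I + s2)) =
                Sum.inr ⟨⟨p, hp_nl⟩, fun v : {v : Fin G.n // G.child v p} => G.val I v.1⟩ := by
              rw [← ht2eq, hqp, TEP.thriftyVar_neg _ hp_nl]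
            exact (hrec s2 (by omega) _ _ hqp2).2 ⟨u, hup⟩
          have hcrit2 : ∀ u : Fin G.n, u ∈ Sf I' →
              B.query (B.path I' (τf I' + s)) = TEP.thriftyVar G I' u →
              G.val I u = G.val I' u := by
            intro u huS hqu
            obtain ⟨p, t2, hup, ht2a, ht2b, hqp, hnoq⟩ := huse I' u huS
            have hge : t2 ≤ τf I' + s := by
              by_contra hlt
              exact hnoq (τf I' + s) (by omega) (by omega) hqu
            have ht2eq : t2 = τf I' + (t2 - τf I') := by omega
            set s2 := t2 - τf I' with hs2def
            have hs2lt : s2 < s := by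
              rcases Nat.lt_or_ge s2 s with h' | h'
              · exact h'
              · exfalso
                have hseq : s2 = s := by omega
                rw [ht2eq, hseq] at hqp
                rw [hqp] at hqu
                have hnd := congrArg TEP.nodeOf hqu
                rw [TEP.nodeOf_thriftyVar, TEP.nodeOf_thriftyVar] at hnd
                have hcc := (hchild u p).1 hup
                rw [hnd] at hcc
                omega
            have hp_nl : ¬ G.IsLeaf p := fun hl => hl u hup
            have hqp2 : B.query (B.path I (τf I + s2)) =
                Sum.inr ⟨⟨p, hp_nl⟩, fun v : {v : Fin G.n // G.child v p} => G.val I' v.1⟩ := by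
              rw [hpe s2 (by omega), ← ht2eq, hqp, TEP.thriftyVar_neg _ hp_nl]
            exact ((hrec s2 (by omega) _ _ hqp2).1 ⟨u, hup⟩).symm
          have hvalS : I (B.query (B.path I (τf I + s))) =
              I' (B.query (B.path I' (τf I' + s))) := by
            rw [← hpe s le_rfl]
            rcases hxq : B.query (B.path I (τf I + s)) with lf | ⟨w, a⟩
            · obtain ⟨u, hu⟩ := lf
              have hxthr : B.query (B.path I (τf I + s)) = TEP.thriftyVar G I u := by
                rw [hxq, TEP.thriftyVar_pos _ hu]
              have hxthr' : B.query (B.path I' (τf I' + s)) = TEP.thriftyVar G I' u := by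
                rw [← hpe s le_rfl, hxq, TEP.thriftyVar_pos _ hu]
              by_cases huS : u ∈ Sf I
              · exact (TEP.val_leaf I hu).symm.trans
                  ((hcrit1 u huS hxthr).trans (TEP.val_leaf I' hu))
              · by_cases huS' : u ∈ Sf I'
                · exact (TEP.val_leaf I hu).symm.trans
                    ((hcrit2 u huS' hxthr').trans (TEP.val_leaf I' hu))
                · have h1 := hKneg I c (Sum.inl ⟨u, hu⟩) (fun hcx => huS hcx.1)
                  have h2 := hKneg I' c' (Sum.inl ⟨u, hu⟩) (fun hcx => huS' hcx.1)
                  have h3 := congrFun hK (Sum.inl ⟨u, hu⟩)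
                  rw [h1, h2] at h3
                  exact h3
            · have hqthr := TEP.query_thrifty B I (Tf I) hthrifty (hvis I)
                (show τf I + s ≤ Tf I by omega) hxq
              have hxq' : B.query (B.path I' (τf I' + s)) = Sum.inr ⟨w, a⟩ := by
                rw [← hpe s le_rfl]; exact hxq
              have hqthr' := TEP.query_thrifty B I' (Tf I') hthrifty (hvis I')
                (show τf I' + s ≤ Tf I' by omega) hxq'
              have e1 : Sum.inr ⟨w, a⟩ = TEP.thriftyVar G I w.1 := by
                rw [← hxq]; exact hqthr.1
              have e1' : Sum.inr ⟨w, a⟩ = TEP.thriftyVar G I' w.1 := by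
                rw [← hxq']; exact hqthr'.1
              have hv1 : I (Sum.inr ⟨w, a⟩) = G.val I w.1 := by
                rw [e1]; exact (TEP.val_thrifty I w.1).symm
              have hv2 : G.val I' w.1 = I' (Sum.inr ⟨w, a⟩) := by
                rw [e1']; exact TEP.val_thrifty I' w.1
              by_cases huS : w.1 ∈ Sf I
              · exact hv1.trans ((hcrit1 w.1 huS hqthr.1).trans hv2)
              · by_cases huS' : w.1 ∈ Sf I'
                · exact hv1.trans ((hcrit2 w.1 huS' hqthr'.1).trans hv2)
                · have h1 := hKneg I c (Sum.inr ⟨w, a⟩) (fun hcx => huS hcx.1)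
                  have h2 := hKneg I' c' (Sum.inr ⟨w, a⟩) (fun hcx => huS' hcx.1)
                  have h3 := congrFun hK (Sum.inr ⟨w, a⟩)
                  rw [h1, h2] at h3
                  exact h3
          show B.path I (τf I + (s + 1)) = B.path I' (τf I' + (s + 1))
          rw [show τf I + (s + 1) = (τf I + s) + 1 by omega,
              show τf I' + (s + 1) = (τf I' + s) + 1 by omega]
          show B.next (B.path I (τf I + s)) (I (B.query (B.path I (τf I + s)))) = _
          rw [hvalS, hpe s le_rfl]
          rfl
    have hLL : L = L' := by
      rcases Nat.lt_trichotomy L L' with hlt | heq | hgt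
      · exfalso
        have hpeL := halign L (by omega)
        have h1 := hsome I
        have h2 : B.out (B.path I' (τf I' + L)) = none := hvis I' _ (by omega)
        rw [← hpeL] at h2
        rw [show τf I + L = Tf I by omega] at h2
        rw [h2] at h1
        simp at h1
      · exact heq
      · exfalso
        have hpeL := halign L' (by omega)
        have h1 := hsome I'
        have h2 : B.out (B.path I (τf I + L')) = none := hvis I _ (by omega)
        rw [hpeL] at h2
        rw [show τf I' + L' = Tf I' by omega] at h2
        rw [h2] at h1
        simp at h1
    have hpeall : ∀ j, j ≤ L → B.path I (τf I + j) = B.path I' (τf I' + j) :=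
      fun j hj => halign j (by omega)
    have hrecG : ∀ j, j ≤ L → ∀ (w : {u : Fin G.n // ¬ G.IsLeaf u})
        (a : {v : Fin G.n // G.child v w.1} → Fin k),
        B.query (B.path I (τf I + j)) = Sum.inr ⟨w, a⟩ →
        (∀ v, a v = G.val I v.1) ∧ (∀ v, a v = G.val I' v.1) := by
      intro j hj w a hqj
      have h1 := hthrifty I _ w a ⟨τf I + j, hvisle _ (by omega), rfl⟩ hqj
      have hqj' : B.query (B.path I' (τf I' + j)) = Sum.inr ⟨w, a⟩ := by
        rw [← hpeall j hj]; exact hqj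
      have h2 := hthrifty I' _ w a ⟨τf I' + j, hvisle' _ (by omega), rfl⟩ hqj'
      exact ⟨h1, h2⟩
    have hcritG1 : ∀ u : Fin G.n, u ∈ Sf I → G.val I u = G.val I' u := by
      intro u huS
      obtain ⟨p, t2, hup, ht2a, ht2b, hqp, -⟩ := huse I u huS
      have ht2eq : t2 = τf I + (t2 - τf I) := by omega
      set s2 := t2 - τf I with hs2def
      have hs2le : s2 ≤ L := by omega
      have hp_nl : ¬ G.IsLeaf p := fun hl => hl u hup
      have hqp2 : B.query (B.path I (τf I + s2)) =
          Sum.inr ⟨⟨p, hp_nl⟩, fun v : {v : Fin G.n // G.child v p} => G.val I v.1⟩ := by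
        rw [← ht2eq, hqp, TEP.thriftyVar_neg _ hp_nl]
      exact (hrecG s2 hs2le _ _ hqp2).2 ⟨u, hup⟩
    have hcritG2 : ∀ u : Fin G.n, u ∈ Sf I' → G.val I u = G.val I' u := by
      intro u huS
      obtain ⟨p, t2, hup, ht2a, ht2b, hqp, -⟩ := huse I' u huS
      have ht2eq : t2 = τf I' + (t2 - τf I') := by omega
      set s2 := t2 - τf I' with hs2def
      have hs2le : s2 ≤ L := by omega
      have hp_nl : ¬ G.IsLeaf p := fun hl => hl u hup
      have hqp2 : B.query (B.path I (τf I + s2)) =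
          Sum.inr ⟨⟨p, hp_nl⟩, fun v : {v : Fin G.n // G.child v p} => G.val I' v.1⟩ := by
        rw [hpeall s2 hs2le, ← ht2eq, hqp, TEP.thriftyVar_neg _ hp_nl]
      exact ((hrecG s2 hs2le _ _ hqp2).1 ⟨u, hup⟩).symm
    have hvala : ∀ u : Fin G.n, G.val I u = G.val I' u := by
      have key : ∀ N (u : Fin G.n), G.n - (u : ℕ) ≤ N → G.val I u = G.val I' u := by
        intro N
        induction N with
        | zero => intro u h0; have := u.2; omega
        | succ N ihN =>
          intro u hN
          by_cases huS : u ∈ Sf I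
          · exact hcritG1 u huS
          by_cases huS' : u ∈ Sf I'
          · exact hcritG2 u huS'
          by_cases hu : G.IsLeaf u
          · rw [TEP.val_leaf I hu, TEP.val_leaf I' hu]
            have h1 := hKneg I c (Sum.inl ⟨u, hu⟩) (fun hcx => huS hcx.1)
            have h2 := hKneg I' c' (Sum.inl ⟨u, hu⟩) (fun hcx => huS' hcx.1)
            have h3 := congrFun hK (Sum.inl ⟨u, hu⟩)
            rw [h1, h2] at h3
            exact h3
          · rw [TEP.val_node I hu, TEP.val_node I' hu]
            have hch2 : (fun v : {v : Fin G.n // G.child v u} => G.val I v.1) =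
                (fun v : {v : Fin G.n // G.child v u} => G.val I' v.1) := by
              funext v
              refine ihN v.1 ?_
              have hv1 := (hchild v.1 u).1 v.2
              have hv2 := v.1.2
              omega
            rw [hch2]
            have h1 := hKneg I c (Sum.inr ⟨⟨u, hu⟩, fun v => G.val I' v.1⟩)
              (fun hcx => huS hcx.1)
            have h2 := hKneg I' c' (Sum.inr ⟨⟨u, hu⟩, fun v => G.val I' v.1⟩)
              (fun hcx => huS' hcx.1)
            have h3 := congrFun hK (Sum.inr ⟨⟨u, hu⟩, fun v => G.val I' v.1⟩)
            rw [h1, h2] at h3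
            exact h3
      exact fun u => key _ u le_rfl
    have hII : I = I' := by
      funext x
      rcases x with lf | ⟨w, a⟩
      · obtain ⟨u, hu⟩ := lf
        exact (TEP.val_leaf I hu).symm.trans ((hvala u).trans (TEP.val_leaf I' hu))
      · have hext : ∀ (J : G.Var k → Fin k), Sum.inr ⟨w, a⟩ = TEP.thriftyVar G J w.1 →
            a = fun v : {v : Fin G.n // G.child v w.1} => G.val J v.1 := by
          intro J hxeq
          rw [TEP.thriftyVar_neg _ w.2] at hxeq
          simp only [Sum.inr.injEq, Sigma.mk.inj_iff] at hxeq
          exact eq_of_heq hxeq.2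
        have hch2 : (fun v : {v : Fin G.n // G.child v w.1} => G.val I v.1) =
            (fun v : {v : Fin G.n // G.child v w.1} => G.val I' v.1) :=
          funext fun v => hvala v.1
        by_cases ha : a = fun v : {v : Fin G.n // G.child v w.1} => G.val I v.1
        · have hx1 : Sum.inr ⟨w, a⟩ = TEP.thriftyVar G I w.1 := by
            rw [ha, TEP.thriftyVar_neg _ w.2]
          have hx2 : Sum.inr ⟨w, a⟩ = TEP.thriftyVar G I' w.1 := by
            rw [ha, hch2, TEP.thriftyVar_neg _ w.2]
          have hv1 : I (Sum.inr ⟨w, a⟩) = G.val I w.1 := by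
            rw [hx1]; exact (TEP.val_thrifty I w.1).symm
          have hv2 : G.val I' w.1 = I' (Sum.inr ⟨w, a⟩) := by
            rw [hx2]; exact TEP.val_thrifty I' w.1
          exact hv1.trans ((hvala w.1).trans hv2)
        · have hnc1 : ¬ crit I (Sum.inr ⟨w, a⟩) := by
            rintro ⟨-, hxeq⟩
            exact ha (hext I hxeq)
          have hnc2 : ¬ crit I' (Sum.inr ⟨w, a⟩) := by
            rintro ⟨-, hxeq⟩
            refine ha ?_
            rw [hext I' hxeq, hch2]
          have h1 := hKneg I c (Sum.inr ⟨w, a⟩) hnc1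
          have h2 := hKneg I' c' (Sum.inr ⟨w, a⟩) hnc2
          have h3 := congrFun hK (Sum.inr ⟨w, a⟩)
          rw [h1, h2] at h3
          exact h3
    subst hII
    have hc : c = c' := by
      funext i
      set iso := (Sf I).orderIsoOfFin (hcard I) with hisodef
      have h1 := hKpos I c (iso i).1 (iso i).2
      have h2 := hKpos I c' (iso i).1 (iso i).2
      have h3 := congrFun hK (TEP.thriftyVar G I (iso i).1)
      rw [h1, h2] at h3
      have h4 : iso.symm ⟨(iso i).1, (iso i).2⟩ = i := by
        have h5 : (⟨(iso i).1, (iso i).2⟩ : {x // x ∈ Sf I}) = iso i := rfl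
        rw [h5]
        exact OrderIso.symm_apply_apply _ _
      rw [h4] at h3
      exact h3
    rw [hc]
  letI : Fintype B.State := B.finState
  have hfinVar : Finite (G.Var k) := by
    show Finite ({u : Fin G.n // G.IsLeaf u} ⊕
      (Σ _u : {u : Fin G.n // ¬ G.IsLeaf u}, ({v : Fin G.n // G.child v _u.1} → Fin k)))
    infer_instance
  haveI : Nonempty (G.Var k → Fin k) := ⟨fun _ => ⟨0, hk0⟩⟩
  have hle := Nat.card_le_card_of_injective F hFinj
  rw [Nat.card_prod, Nat.card_prod] at hle
  have h1 : Nat.card (Fin h → Fin k) = k ^ h := by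
    rw [Nat.card_fun, Nat.card_eq_fintype_card, Nat.card_eq_fintype_card]
    simp
  rw [h1] at hle
  have hMpos : 0 < Nat.card (G.Var k → Fin k) := Nat.card_pos
  have hsize : Nat.card B.State = B.size := by
    rw [Nat.card_eq_fintype_card]
    rfl
  rw [hsize] at hle
  exact Nat.le_of_mul_le_mul_right hle hMpos
end

section
/- Every thrifty deterministic k-way branching program that computes DE^G_k correctly on all inputs in D_{G,k} (the 'hard inputs') has at least k^p states, where p is the black pebbling cost of the connected rooted dag G with at least two nodes. -/
/-- A single black-pebbling move with respect to a child relation: either place a pebble on a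
node all of whose children are pebbled, simultaneously removing the pebbles from some set `S`
of its children, or remove a pebble from some node. -/
def PebMove {α : Type} [DecidableEq α] (child : α → α → Prop) (C C' : Finset α) : Prop :=
  (∃ (u : α) (S : Finset α), (∀ v, child v u → v ∈ C) ∧ (∀ v ∈ S, child v u) ∧
      C' = insert u (C \ S)) ∨
  (∃ u : α, C' = C.erase u)

/-- `f 0, …, f T` is a complete black pebbling sequence: it starts with no pebbles, ends with the
root pebbled, and each step is a valid move (or leaves the configuration unchanged). -/
def IsCompletePebbling {α : Type} [DecidableEq α] (child : α → α → Prop) (root : α)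
    (f : ℕ → Finset α) (T : ℕ) : Prop :=
  f 0 = ∅ ∧ root ∈ f T ∧ ∀ t < T, PebMove child (f t) (f (t + 1)) ∨ f (t + 1) = f t

/-- The black pebbling cost: the least `p` such that some complete pebbling sequence never has
more than `p` pebbles on the dag simultaneously. -/
noncomputable def pebCost (α : Type) [DecidableEq α] (child : α → α → Prop) (root : α) : ℕ :=
  sInf {p | ∃ f T, IsCompletePebbling child root f T ∧ ∀ t ≤ T, (f t).card ≤ p}
/-- The hard inputs `D_{G,k}`: inputs `I` such that every internal function `f_u^I` outputs `1`
(the first element of `[k]`) except possibly on the tuple of the actual values of the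
children of `u` under `I`. -/
def RootedDag.HardInputs (G : RootedDag) {k : ℕ} (hk : 0 < k) : Set (G.Var k → Fin k) :=
  {I | ∀ (u : {u : Fin G.n // ¬ G.IsLeaf u}) (a : {v : Fin G.n // G.child v u.1} → Fin k),
    a ≠ (fun v => G.val I v.1) → I (Sum.inr ⟨u, a⟩) = ⟨0, hk⟩}

/-- `B` computes `DE^G_k` correctly on every input in the set `S` (behavior elsewhere is
unconstrained). -/
def RootedDag.SolvesDEOn (G : RootedDag) {k : ℕ} (hk : 0 < k)
    (B : BP (G.Var k) k Bool) (S : Set (G.Var k → Fin k)) : Prop :=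
  ∀ I ∈ S, ∃ t, B.VisitsAt I t ∧
    B.out (B.path I t) = some (decide (G.val I G.root = ⟨0, hk⟩))

section ThriftyLB
open Classical

namespace BP
variable {Var Out : Type} {k : ℕ} (B : BP Var k Out)

lemma path_succ (I : Var → Fin k) (t : ℕ) :
    B.path I (t+1) = B.next (B.path I t) (I (B.query (B.path I t))) := rfl

lemma visitsAt_mono {I : Var → Fin k} {t s : ℕ} (h : B.VisitsAt I t) (hs : s ≤ t) :
    B.VisitsAt I s := fun r hr => h r (lt_of_lt_of_le hr hs)

lemma path_congr {I I' : Var → Fin k} {t : ℕ}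
    (h : ∀ s, s < t → I' (B.query (B.path I s)) = I (B.query (B.path I s))) :
    ∀ s, s ≤ t → B.path I' s = B.path I s := by
  intro s hs
  induction s with
  | zero => rfl
  | succ m ih =>
      have hmt : m < t := Nat.lt_of_succ_le hs
      have hm := ih (Nat.le_of_lt hmt)
      rw [path_succ, path_succ, hm, h m hmt]

lemma halt_unique {I : Var → Fin k} {t t' : ℕ} {o o' : Out}
    (h1 : B.VisitsAt I t) (h2 : B.out (B.path I t) = some o)
    (h3 : B.VisitsAt I t') (h4 : B.out (B.path I t') = some o') : t = t' := by
  rcases lt_trichotomy t t' with h | h | h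
  · have := h3 t h; rw [h2] at this; cases this
  · exact h
  · have := h1 t' h; rw [h4] at this; cases this

end BP

namespace RootedDag
variable {G : RootedDag} {k : ℕ}

lemma wf_irrefl {α : Sort*} {r : α → α → Prop} (h : WellFounded r) (a : α) : ¬ r a a := by
  induction a using h.induction with
  | _ a ih => exact fun hr => ih a hr hr

lemma child_irrefl (G : RootedDag) (u : Fin G.n) : ¬ G.child u u := wf_irrefl G.wf u

lemma no_cycle (G : RootedDag) {v w : Fin G.n} (h1 : Relation.ReflTransGen G.child v w)
    (h2 : G.child w v) : False := by
  have : Relation.TransGen G.child v v := Relation.TransGen.tail' h1 h2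
  exact wf_irrefl G.wf.transGen v this

lemma parent_wf (G : RootedDag) : WellFounded (fun a b : Fin G.n => G.child b a) := by
  have htg : WellFounded (fun a b : Fin G.n => Relation.TransGen G.child b a) := by
    have : IsTrans (Fin G.n) (fun a b : Fin G.n => Relation.TransGen G.child b a) :=
      ⟨fun _ _ _ h1 h2 => h2.trans h1⟩
    have : IsIrrefl (Fin G.n) (fun a b : Fin G.n => Relation.TransGen G.child b a) :=
      ⟨fun a => wf_irrefl G.wf.transGen a⟩
    exact Finite.wellFounded_of_trans_of_irrefl _
  exact Subrelation.wf (fun h => Relation.TransGen.single h) htg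

lemma reaches_root (G : RootedDag) (u : Fin G.n) : Relation.ReflTransGen G.child u G.root := by
  induction u using (parent_wf G).induction with
  | _ u ih =>
      by_cases hu : u = G.root
      · subst hu; exact Relation.ReflTransGen.refl
      · obtain ⟨w, hw⟩ := G.root_unique u hu
        exact Relation.ReflTransGen.head hw (ih w hw)

lemma root_has_child (G : RootedDag) (hn : 2 ≤ G.n) : ∃ v, G.child v G.root := by
  have : 1 < Fintype.card (Fin G.n) := by simp only [Fintype.card_fin]; omega
  obtain ⟨u, hu⟩ := Fintype.exists_ne_of_one_lt_card this G.root
  rcases (reaches_root G u).cases_tail with h | ⟨c, _, hc⟩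
  · exact absurd h.symm hu
  · exact ⟨c, hc⟩

lemma root_not_leaf (G : RootedDag) (hn : 2 ≤ G.n) : ¬ G.IsLeaf G.root := by
  obtain ⟨v, hv⟩ := root_has_child G hn
  exact fun h => h v hv

/-- The node a variable belongs to. -/
def nodeOf : G.Var k → Fin G.n
  | Sum.inl u => u.1
  | Sum.inr q => q.1.1

lemma val_unfold (I : G.Var k → Fin k) (u : Fin G.n) :
    G.val I u = if h : G.IsLeaf u then I (Sum.inl ⟨u, h⟩)
      else I (Sum.inr ⟨⟨u, h⟩, fun v => G.val I v.1⟩) := by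
  show WellFounded.fix _ _ u = _
  rw [WellFounded.fix_eq]
  rfl

lemma val_congr {I I' : G.Var k → Fin k} (u : Fin G.n)
    (h : ∀ x : G.Var k, Relation.ReflTransGen G.child (nodeOf x) u → I x = I' x) :
    G.val I u = G.val I' u := by
  induction u using G.wf.induction with
  | _ u ih =>
      rw [val_unfold, val_unfold]
      by_cases hl : G.IsLeaf u
      · rw [dif_pos hl, dif_pos hl]
        exact h _ Relation.ReflTransGen.refl
      · rw [dif_neg hl, dif_neg hl]
        have hch : (fun v : {v : Fin G.n // G.child v u} => G.val I v.1) =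
            fun v => G.val I' v.1 := by
          funext v
          exact ih v.1 v.2 (fun x hx => h x (hx.trans (Relation.ReflTransGen.single v.2)))
        rw [hch]
        exact h _ Relation.ReflTransGen.refl

end RootedDag
end ThriftyLB
section ThriftyLB2
open Classical
namespace RootedDag
variable {G : RootedDag} {k : ℕ}

/-- The canonical hard input with node values `ν`. -/
noncomputable def canon (G : RootedDag) {k : ℕ} (hk : 0 < k) (ν : Fin G.n → Fin k) :
    G.Var k → Fin k
  | Sum.inl u => ν u.1
  | Sum.inr q => if q.2 = (fun v => ν v.1) then ν q.1.1 else ⟨0, hk⟩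

variable (hk : 0 < k)

lemma val_canon (ν : Fin G.n → Fin k) (u : Fin G.n) : G.val (G.canon hk ν) u = ν u := by
  induction u using G.wf.induction with
  | _ u ih =>
      rw [val_unfold]
      by_cases hl : G.IsLeaf u
      · rw [dif_pos hl]; rfl
      · rw [dif_neg hl]
        show (if _ = _ then _ else _) = _
        rw [if_pos]
        funext v
        exact ih v.1 v.2

lemma canon_mem_hard (ν : Fin G.n → Fin k) : G.canon hk ν ∈ G.HardInputs hk := by
  intro u a ha
  show (if _ = _ then _ else _) = _
  rw [if_neg]
  intro h
  apply ha
  funext v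
  rw [val_canon hk ν v.1]
  exact congrFun h v

/-- The thrifty variable of node `u` under node values `ν`. -/
noncomputable def varOf (G : RootedDag) {k : ℕ} (ν : Fin G.n → Fin k) (u : Fin G.n) :
    G.Var k :=
  if h : G.IsLeaf u then Sum.inl ⟨u, h⟩ else Sum.inr ⟨⟨u, h⟩, fun v => ν v.1⟩

lemma nodeOf_varOf (ν : Fin G.n → Fin k) (u : Fin G.n) : nodeOf (G.varOf ν u) = u := by
  by_cases h : G.IsLeaf u
  · rw [show G.varOf ν u = Sum.inl ⟨u, h⟩ from dif_pos h]; rfl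
  · rw [show G.varOf ν u = Sum.inr ⟨⟨u, h⟩, fun v => ν v.1⟩ from dif_neg h]; rfl

lemma canon_varOf (ν : Fin G.n → Fin k) (u : Fin G.n) :
    G.canon hk ν (G.varOf ν u) = ν u := by
  by_cases h : G.IsLeaf u
  · rw [show G.varOf ν u = Sum.inl ⟨u, h⟩ from dif_pos h]; rfl
  · rw [show G.varOf ν u = Sum.inr ⟨⟨u, h⟩, fun v => ν v.1⟩ from dif_neg h]
    show (if _ = _ then _ else _) = _
    rw [if_pos rfl]

/-- On-path thrifty queries: the queried variable of node `u` is `varOf ν u`. -/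
lemma val_update_not_below (ν : Fin G.n → Fin k) (v : Fin G.n) (c : Fin k) (w : Fin G.n)
    (h : ¬ Relation.ReflTransGen G.child v w) :
    G.val (Function.update (G.canon hk ν) (G.varOf ν v) c) w = ν w := by
  rw [show (ν w) = G.val (G.canon hk ν) w from (val_canon hk ν w).symm]
  apply val_congr
  intro x hx
  apply Function.update_of_ne
  intro he
  apply h
  rw [← nodeOf_varOf ν v, ← he]
  exact hx

lemma val_update_self (ν : Fin G.n → Fin k) (v : Fin G.n) (c : Fin k) :
    G.val (Function.update (G.canon hk ν) (G.varOf ν v) c) v = c := by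
  rw [val_unfold]
  by_cases hl : G.IsLeaf v
  · rw [dif_pos hl]
    have : (Sum.inl ⟨v, hl⟩ : G.Var k) = G.varOf ν v := (show G.varOf ν v = Sum.inl ⟨v, hl⟩ from dif_pos hl).symm
    rw [this, Function.update_self]
  · rw [dif_neg hl]
    have hch : (fun w : {w : Fin G.n // G.child w v} =>
        G.val (Function.update (G.canon hk ν) (G.varOf ν v) c) w.1) = fun w => ν w.1 := by
      funext w
      exact val_update_not_below hk ν v c w.1 (fun hr => no_cycle G hr w.2)
    rw [hch]
    have : (Sum.inr ⟨⟨v, hl⟩, fun w => ν w.1⟩ : G.Var k) = G.varOf ν v :=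
      (show G.varOf ν v = Sum.inr ⟨⟨v, hl⟩, fun w => ν w.1⟩ from dif_neg hl).symm
    rw [this, Function.update_self]

lemma update_root_mem_hard (hn : 2 ≤ G.n) (ν : Fin G.n → Fin k) (c : Fin k) :
    Function.update (G.canon hk ν) (G.varOf ν G.root) c ∈ G.HardInputs hk := by
  intro u a ha
  set I' := Function.update (G.canon hk ν) (G.varOf ν G.root) c with hI'
  have hval : ∀ w : {w : Fin G.n // G.child w u.1}, G.val I' w.1 = ν w.1 := by
    intro w
    apply val_update_not_below
    intro hr
    rcases hr.cases_head with h | ⟨d, hd, _⟩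
    · have w2 := w.2
      rw [← h] at w2
      exact G.root_no_parent u.1 w2
    · exact G.root_no_parent d hd
  have ha' : a ≠ fun v => ν v.1 := by
    intro h; apply ha; funext v; rw [congrFun h v, hval v]
  have hne : (Sum.inr ⟨u, a⟩ : G.Var k) ≠ G.varOf ν G.root := by
    by_cases h0 : G.IsLeaf G.root
    · rw [show G.varOf ν G.root = Sum.inl ⟨G.root, h0⟩ from dif_pos h0]
      intro h; cases h
    · rw [show G.varOf ν G.root = Sum.inr ⟨⟨G.root, h0⟩, fun v => ν v.1⟩ from dif_neg h0]
      intro h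
      injection h with h
      obtain ⟨h1, h2⟩ := Sigma.mk.inj_iff.mp h
      subst h1
      exact ha' (eq_of_heq h2)
  rw [hI']; refine (Function.update_of_ne (α := G.Var k) (β := fun _ => Fin k) hne c (G.canon hk ν)).trans ?_
  show (if _ = _ then _ else _) = _
  rw [if_neg]
  intro h
  apply ha
  funext v
  rw [hval v]
  exact congrFun h v

end RootedDag
end ThriftyLB2
section ThriftyLB3
open Classical

variable {n : ℕ} (child : Fin n → Fin n → Prop) (M : ℕ)

/-- Configurations reachable by valid bounded pebbling sequences. -/
def Reach (C C' : Finset (Fin n)) : Prop :=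
  ∃ f : ℕ → Finset (Fin n), ∃ T,
    f 0 = C ∧ f T = C' ∧ (∀ t < T, PebMove child (f t) (f (t+1)) ∨ f (t+1) = f t) ∧
    ∀ t ≤ T, (f t).card ≤ M

lemma reach_refl {C : Finset (Fin n)} (h : C.card ≤ M) : Reach child M C C := by
  refine ⟨fun _ => C, 0, rfl, rfl, by omega, fun t _ => h⟩

lemma reach_single {C C' : Finset (Fin n)} (h : PebMove child C C' ∨ C' = C)
    (h1 : C.card ≤ M) (h2 : C'.card ≤ M) : Reach child M C C' := by
  refine ⟨fun t => if t = 0 then C else C', 1, by simp, by simp, ?_, ?_⟩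
  · intro t ht
    have : t = 0 := by omega
    subst this
    simpa using h
  · intro t _
    by_cases h0 : t = 0 <;> simp [h0, h1, h2]

lemma reach_trans {C1 C2 C3 : Finset (Fin n)} (h1 : Reach child M C1 C2)
    (h2 : Reach child M C2 C3) : Reach child M C1 C3 := by
  obtain ⟨f1, T1, hf10, hf1T, hs1, hc1⟩ := h1
  obtain ⟨f2, T2, hf20, hf2T, hs2, hc2⟩ := h2
  refine ⟨fun t => if t ≤ T1 then f1 t else f2 (t - T1), T1 + T2, by simp [hf10], ?_, ?_, ?_⟩
  · dsimp only
    by_cases hT2 : T2 = 0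
    · subst hT2
      simp only [Nat.add_zero, le_refl, if_pos]
      rw [hf1T, ← hf20, hf2T]
    · have hx : ¬ (T1 + T2 ≤ T1) := by omega
      rw [if_neg hx]
      have hy : T1 + T2 - T1 = T2 := by omega
      rw [hy, hf2T]
  · intro t ht
    dsimp only
    by_cases ha : t + 1 ≤ T1
    · rw [if_pos ha, if_pos (by omega)]
      exact hs1 t (by omega)
    · by_cases hb : t ≤ T1
      · have : t = T1 := by omega
        subst this
        rw [if_pos le_rfl, if_neg ha, hf1T, ← hf20]
        have : t + 1 - t = 1 := by omega
        rw [this]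
        exact hs2 0 (by omega)
      · rw [if_neg hb, if_neg ha]
        have : t + 1 - T1 = (t - T1) + 1 := by omega
        rw [this]
        exact hs2 (t - T1) (by omega)
  · intro t _
    dsimp only
    by_cases hb : t ≤ T1
    · rw [if_pos hb]; exact hc1 t hb
    · rw [if_neg hb]; exact hc2 (t - T1) (by omega)

lemma reach_of_subset : ∀ (m : ℕ) (C C' : Finset (Fin n)), (C \ C').card = m → C' ⊆ C →
    C.card ≤ M → Reach child M C C' := by
  intro m
  induction m with
  | zero =>
      intro C C' hm hsub hc
      have : C = C' := by
        apply Finset.Subset.antisymm _ hsub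
        intro x hx
        by_contra hx'
        have : x ∈ C \ C' := Finset.mem_sdiff.mpr ⟨hx, hx'⟩
        rw [Finset.card_eq_zero.mp hm] at this
        simp at this
      subst this
      exact reach_refl child M hc
  | succ m ih =>
      intro C C' hm hsub hc
      have hne : (C \ C').Nonempty := by
        rw [← Finset.card_pos, hm]; omega
      obtain ⟨u, hu⟩ := hne
      rw [Finset.mem_sdiff] at hu
      have hstep : Reach child M C (C.erase u) :=
        reach_single child M (Or.inl (Or.inr ⟨u, rfl⟩)) hc
          (le_trans (Finset.card_le_card (Finset.erase_subset _ _)) hc)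
      refine reach_trans child M hstep (ih (C.erase u) C' ?_ ?_ ?_)
      · rw [Finset.erase_sdiff_comm, Finset.card_erase_of_mem (Finset.mem_sdiff.mpr hu)]
        omega
      · intro x hx
        exact Finset.mem_erase.mpr ⟨fun he => hu.2 (he ▸ hx), hsub hx⟩
      · exact le_trans (Finset.card_le_card (Finset.erase_subset _ _)) hc

/-- Assembling a complete pebbling from a sequence of generalized moves. -/
lemma pebCost_le (root : Fin n) (g : ℕ → Finset (Fin n)) (N : ℕ)
    (h0 : g 0 = ∅) (hroot : root ∈ g N)
    (hstep : ∀ t < N, PebMove child (g t) (g (t+1)) ∨ g (t+1) ⊆ g t)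
    (hcard : ∀ t ≤ N, (g t).card ≤ M) :
    pebCost (Fin n) child root ≤ M := by
  have hreach : ∀ t ≤ N, Reach child M (g 0) (g t) := by
    intro t
    induction t with
    | zero => exact fun _ => reach_refl child M (by rw [h0]; simp)
    | succ m ih =>
        intro hm
        refine reach_trans child M (ih (by omega)) ?_
        rcases hstep m (by omega) with h | h
        · exact reach_single child M (Or.inl h) (hcard m (by omega)) (hcard (m+1) hm)
        · exact reach_of_subset child M _ _ _ rfl h (hcard m (by omega))
  obtain ⟨f, T, hf0, hfT, hs, hcd⟩ := hreach N le_rfl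
  apply Nat.sInf_le
  refine ⟨f, T, ⟨by rw [hf0, h0], by rw [hfT]; exact hroot, hs⟩, hcd⟩

end ThriftyLB3
section ThriftyLB4
open Classical RootedDag BP

/-- Bundled context for the lower-bound proof. -/
structure Ctx : Type 1 where
  G : RootedDag
  k : ℕ
  hkk : 2 ≤ k
  hn : 2 ≤ G.n
  B : BP (G.Var k) k Bool
  hk0 : 0 < k
  hsolve : G.SolvesDEOn hk0 B (G.HardInputs hk0)
  hthrifty : G.Thrifty B
  p : ℕ
  hp : pebCost (Fin G.n) G.child G.root = p

namespace Ctx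
variable (c : Ctx)

/-- Flip a value to a different one. -/
noncomputable def flip (x : Fin c.k) : Fin c.k :=
  if x = ⟨0, c.hk0⟩ then ⟨1, c.hkk⟩ else ⟨0, c.hk0⟩

lemma flip_ne (x : Fin c.k) : c.flip x ≠ x := by
  unfold flip
  split
  · rename_i h
    rw [h]
    intro he
    exact absurd (congrArg Fin.val he) (by simp)
  · rename_i h
    exact fun he => h he.symm

lemma flip_zero_iff (x : Fin c.k) : c.flip x = ⟨0, c.hk0⟩ ↔ ¬ (x = ⟨0, c.hk0⟩) := by
  unfold flip
  split
  · rename_i h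
    simp only [h]
    constructor
    · intro he
      exact absurd (congrArg Fin.val he) (by simp)
    · tauto
  · tauto

noncomputable def inp (ν : Fin c.G.n → Fin c.k) : c.G.Var c.k → Fin c.k :=
  c.G.canon c.hk0 ν

lemma val_inp (ν : Fin c.G.n → Fin c.k) (u : Fin c.G.n) : c.G.val (c.inp ν) u = ν u :=
  val_canon c.hk0 ν u

lemma val_update_self' (ν : Fin c.G.n → Fin c.k) (v : Fin c.G.n) (x : Fin c.k) :
    c.G.val (Function.update (c.inp ν) (c.G.varOf ν v) x) v = x :=
  val_update_self c.hk0 ν v x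

lemma update_root_hard' (ν : Fin c.G.n → Fin c.k) (x : Fin c.k) :
    Function.update (c.inp ν) (c.G.varOf ν c.G.root) x ∈ c.G.HardInputs c.hk0 :=
  update_root_mem_hard c.hk0 c.hn ν x

lemma ex_halt (ν : Fin c.G.n → Fin c.k) : ∃ t, c.B.VisitsAt (c.inp ν) t ∧
    c.B.out (c.B.path (c.inp ν) t) = some (decide (ν c.G.root = ⟨0, c.hk0⟩)) := by
  obtain ⟨t, h1, h2⟩ := c.hsolve (c.inp ν) (canon_mem_hard c.hk0 ν)
  rw [c.val_inp ν] at h2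
  exact ⟨t, h1, h2⟩

/-- The halting time of the canonical input with node values `ν`. -/
noncomputable def Tv (ν : Fin c.G.n → Fin c.k) : ℕ := Classical.choose (c.ex_halt ν)

lemma Tv_vis (ν : Fin c.G.n → Fin c.k) : c.B.VisitsAt (c.inp ν) (c.Tv ν) :=
  (Classical.choose_spec (c.ex_halt ν)).1

lemma Tv_out (ν : Fin c.G.n → Fin c.k) :
    c.B.out (c.B.path (c.inp ν) (c.Tv ν)) = some (decide (ν c.G.root = ⟨0, c.hk0⟩)) :=
  (Classical.choose_spec (c.ex_halt ν)).2

lemma vis (ν : Fin c.G.n → Fin c.k) {s : ℕ} (hs : s ≤ c.Tv ν) :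
    c.B.VisitsAt (c.inp ν) s := c.B.visitsAt_mono (c.Tv_vis ν) hs

/-- On the computation path of a canonical input, every query returns the value of the
queried node. -/
lemma onpath_query_val (ν : Fin c.G.n → Fin c.k) {s : ℕ} (hs : s ≤ c.Tv ν) :
    c.inp ν (c.B.query (c.B.path (c.inp ν) s)) =
      ν (nodeOf (c.B.query (c.B.path (c.inp ν) s))) := by
  cases hq : c.B.query (c.B.path (c.inp ν) s) with
  | inl u => rfl
  | inr q =>
      obtain ⟨w, a⟩ := q
      have hth := c.hthrifty (c.inp ν) _ w a ⟨s, c.vis ν hs, rfl⟩ hq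
      show (if _ = _ then _ else _) = _
      rw [if_pos]
      · rfl
      · funext v
        exact (hth v).trans (c.val_inp ν v.1)

/-- `v`'s variable is queried at time `s`. -/
def qrP (ν : Fin c.G.n → Fin c.k) (v : Fin c.G.n) (s : ℕ) : Prop :=
  s < c.Tv ν ∧ nodeOf (c.B.query (c.B.path (c.inp ν) s)) = v

/-- `v` is needed at time `s`: the query at `s` is to a function of a parent of `v`. -/
def ndP (ν : Fin c.G.n → Fin c.k) (v : Fin c.G.n) (s : ℕ) : Prop :=
  s < c.Tv ν ∧ ∃ w a, c.B.query (c.B.path (c.inp ν) s) = Sum.inr ⟨w, a⟩ ∧ c.G.child v w.1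

lemma ndP_lt_Tv {ν : Fin c.G.n → Fin c.k} {v : Fin c.G.n} {s : ℕ} (h : c.ndP ν v s) :
    s < c.Tv ν := h.1

/-- If a node's function is queried, each child's variable was queried strictly earlier. -/
lemma children_queried (ν : Fin c.G.n → Fin c.k) {s₀ : ℕ} (hs₀ : s₀ < c.Tv ν)
    {w : {u : Fin c.G.n // ¬ c.G.IsLeaf u}} {a : {v : Fin c.G.n // c.G.child v w.1} → Fin c.k}
    (hq : c.B.query (c.B.path (c.inp ν) s₀) = Sum.inr ⟨w, a⟩)
    {v : Fin c.G.n} (hv : c.G.child v w.1) :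
    ∃ s, s < s₀ ∧ c.qrP ν v s := by
  by_contra hno
  push_neg at hno
  have hpath : ∀ s, s ≤ s₀ →
      c.B.path (Function.update (c.inp ν) (c.G.varOf ν v) (c.flip (ν v))) s =
        c.B.path (c.inp ν) s := by
    apply c.B.path_congr
    intro s hss
    apply Function.update_of_ne
    intro he
    have : nodeOf (c.B.query (c.B.path (c.inp ν) s)) = v := by rw [he, nodeOf_varOf]
    exact hno s hss ⟨lt_trans hss hs₀, this⟩
  have hvis : c.B.VisitsAt (c.inp ν) s₀ := c.vis ν (le_of_lt hs₀)
  have hvis' : c.B.VisitsAt (Function.update (c.inp ν) (c.G.varOf ν v) (c.flip (ν v))) s₀ := by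
    intro r hr
    rw [hpath r (le_of_lt hr)]
    exact hvis r hr
  have h1 := c.hthrifty (c.inp ν) (c.B.path (c.inp ν) s₀) w a ⟨s₀, hvis, rfl⟩ hq ⟨v, hv⟩
  have h2 := c.hthrifty (Function.update (c.inp ν) (c.G.varOf ν v) (c.flip (ν v)))
    (c.B.path (c.inp ν) s₀) w a ⟨s₀, hvis', hpath s₀ le_rfl⟩ hq ⟨v, hv⟩
  have hx : ν v = c.flip (ν v) :=
    (c.val_inp ν v).symm.trans (h1.symm.trans (h2.trans (c.val_update_self' ν v _)))
  exact c.flip_ne (ν v) hx.symm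

/-- The root's variable is queried before halting. -/
lemma ex_rootq (ν : Fin c.G.n → Fin c.k) :
    ∃ s, s < c.Tv ν ∧ nodeOf (c.B.query (c.B.path (c.inp ν) s)) = c.G.root := by
  by_contra hno
  push_neg at hno
  have hpath : ∀ s, s ≤ c.Tv ν →
      c.B.path (Function.update (c.inp ν) (c.G.varOf ν c.G.root) (c.flip (ν c.G.root))) s =
        c.B.path (c.inp ν) s := by
    apply c.B.path_congr
    intro s hss
    apply Function.update_of_ne
    intro he
    exact hno s hss (by rw [he, nodeOf_varOf])
  have hvis' : c.B.VisitsAt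
      (Function.update (c.inp ν) (c.G.varOf ν c.G.root) (c.flip (ν c.G.root))) (c.Tv ν) := by
    intro r hr
    rw [hpath r (le_of_lt hr)]
    exact c.Tv_vis ν r hr
  have hout' : c.B.out (c.B.path
      (Function.update (c.inp ν) (c.G.varOf ν c.G.root) (c.flip (ν c.G.root))) (c.Tv ν)) =
      some (decide (ν c.G.root = ⟨0, c.hk0⟩)) := by
    rw [hpath _ le_rfl]
    exact c.Tv_out ν
  obtain ⟨t', h1', h2'⟩ := c.hsolve _ (c.update_root_hard' ν (c.flip (ν c.G.root)))
  have ht' : t' = c.Tv ν := c.B.halt_unique h1' h2' hvis' hout'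
  subst ht'
  rw [hout'] at h2'
  rw [c.val_update_self' ν c.G.root (c.flip (ν c.G.root))] at h2'
  have hdec : (decide (c.flip (ν c.G.root) = ⟨0, c.hk0⟩)) =
      (decide (ν c.G.root = ⟨0, c.hk0⟩)) := (Option.some.inj h2').symm
  by_cases h0 : ν c.G.root = ⟨0, c.hk0⟩
  · rw [h0] at hdec
    have h1 : c.flip ⟨0, c.hk0⟩ = ⟨0, c.hk0⟩ :=
      of_decide_eq_true (by rw [hdec]; exact decide_eq_true rfl)
    exact c.flip_ne _ (h0 ▸ h1)
  · have hf : c.flip (ν c.G.root) = ⟨0, c.hk0⟩ := (c.flip_zero_iff _).mpr h0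
    exact h0 (of_decide_eq_true (by rw [← hdec, hf]; exact decide_eq_true rfl))

end Ctx
end ThriftyLB4
section ThriftyLB5
open Classical RootedDag BP

namespace Ctx
variable (c : Ctx)

/-- The pebbling configuration at time `t` for the canonical input `ν`. -/
noncomputable def Btv (ν : Fin c.G.n → Fin c.k) (t : ℕ) : Finset (Fin c.G.n) :=
  Finset.univ.filter (fun v => ∃ r, t ≤ r ∧ c.ndP ν v r ∧
    ∀ s, t ≤ s → s < r → ¬ c.qrP ν v s)

lemma mem_Btv {ν : Fin c.G.n → Fin c.k} {t : ℕ} {v : Fin c.G.n} :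
    v ∈ c.Btv ν t ↔ ∃ r, t ≤ r ∧ c.ndP ν v r ∧ ∀ s, t ≤ s → s < r → ¬ c.qrP ν v s := by
  simp [Btv]

lemma ndP_qrP_of (ν : Fin c.G.n → Fin c.k) {v : Fin c.G.n} {r : ℕ} (h : c.ndP ν v r) :
    ∃ s, s < r ∧ c.qrP ν v s := by
  obtain ⟨hr, w, a, hq, hc⟩ := h
  obtain ⟨s, hs, hqr⟩ := c.children_queried ν hr hq hc
  exact ⟨s, hs, hqr⟩

lemma Btv_zero (ν : Fin c.G.n → Fin c.k) : c.Btv ν 0 = ∅ := by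
  ext v
  simp only [Finset.notMem_empty, iff_false]
  rw [mem_Btv]
  rintro ⟨r, -, hnd, hgap⟩
  obtain ⟨s, hs, hqr⟩ := c.ndP_qrP_of ν hnd
  exact hgap s (Nat.zero_le s) hs hqr

lemma qrP_ndP_ne {ν : Fin c.G.n → Fin c.k} {v : Fin c.G.n} {s : ℕ}
    (h1 : c.qrP ν v s) (h2 : c.ndP ν v s) : False := by
  obtain ⟨-, hn1⟩ := h1
  obtain ⟨-, w, a, hq, hc⟩ := h2
  rw [hq] at hn1
  have hwv : w.1 = v := hn1
  exact child_irrefl c.G v (hwv ▸ hc)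

lemma Btv_step (ν : Fin c.G.n → Fin c.k) (t : ℕ) :
    PebMove c.G.child (c.Btv ν t) (c.Btv ν (t+1)) ∨ c.Btv ν (t+1) ⊆ c.Btv ν t := by
  set u := nodeOf (c.B.query (c.B.path (c.inp ν) t)) with hu
  have hadd : ∀ v, v ∈ c.Btv ν (t+1) → v ∉ c.Btv ν t → v = u := by
    intro v hv1 hv0
    obtain ⟨r, hr1, hnd, hgap⟩ := (c.mem_Btv).mp hv1
    by_cases hqt : c.qrP ν v t
    · rw [hu]
      exact hqt.2.symm
    · exfalso
      apply hv0
      rw [mem_Btv]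
      refine ⟨r, by omega, hnd, ?_⟩
      intro s hs1 hs2 hq
      rcases Nat.eq_or_lt_of_le hs1 with h | h
      · exact hqt (h ▸ hq)
      · exact hgap s h hs2 hq
  have hdel : ∀ v, v ∈ c.Btv ν t → v ∉ c.Btv ν (t+1) → c.ndP ν v t := by
    intro v hv0 hv1
    obtain ⟨r, hr1, hnd, hgap⟩ := (c.mem_Btv).mp hv0
    by_cases hr : t + 1 ≤ r
    · exfalso
      apply hv1
      rw [mem_Btv]
      exact ⟨r, hr, hnd, fun s hs1 hs2 hq => hgap s (by omega) hs2 hq⟩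
    · have : r = t := by omega
      exact this ▸ hnd
  by_cases huin : u ∈ c.Btv ν (t+1)
  · left
    left
    refine ⟨u, c.Btv ν t \ c.Btv ν (t+1), ?_, ?_, ?_⟩
    · -- children of u are pebbled at time t
      intro v hv
      rw [mem_Btv]
      obtain ⟨r, hr1, hnd, -⟩ := (c.mem_Btv).mp huin
      have htT : t < c.Tv ν := by
        have := hnd.1
        omega
      cases hq : c.B.query (c.B.path (c.inp ν) t) with
      | inl w =>
          exfalso
          exact w.2 v (by rw [hu, hq] at hv; exact hv)
      | inr q =>
          obtain ⟨w, a⟩ := q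
          refine ⟨t, le_rfl, ⟨htT, w, a, hq, ?_⟩, fun s h1 h2 _ => by omega⟩
          rw [hu, hq] at hv
          exact hv
    · intro v hv
      rw [Finset.mem_sdiff] at hv
      obtain ⟨htT, w, a, hq, hc⟩ := hdel v hv.1 hv.2
      have : w.1 = u := by rw [hu, hq]; rfl
      exact this ▸ hc
    · ext v
      simp only [Finset.mem_insert, Finset.mem_sdiff]
      constructor
      · intro hv
        by_cases hv0 : v ∈ c.Btv ν t
        · exact Or.inr ⟨hv0, fun h => h.2 hv⟩
        · exact Or.inl (hadd v hv hv0)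
      · rintro (h | ⟨h1, h2⟩)
        · exact h ▸ huin
        · by_contra hv
          exact h2 ⟨h1, hv⟩
  · right
    intro v hv
    by_contra hv0
    exact huin ((hadd v hv hv0) ▸ hv)

/-- A chosen time at which the root is queried. -/
noncomputable def sr (ν : Fin c.G.n → Fin c.k) : ℕ := Classical.choose (c.ex_rootq ν)

lemma sr_lt (ν : Fin c.G.n → Fin c.k) : c.sr ν < c.Tv ν :=
  (Classical.choose_spec (c.ex_rootq ν)).1

lemma sr_node (ν : Fin c.G.n → Fin c.k) :
    nodeOf (c.B.query (c.B.path (c.inp ν) (c.sr ν))) = c.G.root :=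
  (Classical.choose_spec (c.ex_rootq ν)).2

lemma sr_query (ν : Fin c.G.n → Fin c.k) :
    ∃ w a, c.B.query (c.B.path (c.inp ν) (c.sr ν)) = Sum.inr ⟨w, a⟩ ∧ w.1 = c.G.root := by
  cases hq : c.B.query (c.B.path (c.inp ν) (c.sr ν)) with
  | inl w =>
      exfalso
      have : w.1 = c.G.root := by rw [← c.sr_node ν, hq]; rfl
      exact root_not_leaf c.G c.hn (this ▸ w.2)
  | inr q =>
      obtain ⟨w, a⟩ := q
      refine ⟨w, a, rfl, ?_⟩
      rw [← c.sr_node ν, hq]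
      rfl

lemma ex_tstar (ν : Fin c.G.n → Fin c.k) :
    ∃ t, t ≤ c.sr ν ∧ ∀ t', t' ≤ c.sr ν → (c.Btv ν t').card ≤ (c.Btv ν t).card := by
  obtain ⟨t, ht, hmax⟩ := Finset.exists_max_image (Finset.range (c.sr ν + 1))
    (fun t => (c.Btv ν t).card) ⟨0, by simp⟩
  rw [Finset.mem_range] at ht
  exact ⟨t, by omega, fun t' ht' => hmax t' (Finset.mem_range.mpr (by omega))⟩

/-- The critical time. -/
noncomputable def tstar (ν : Fin c.G.n → Fin c.k) : ℕ := Classical.choose (c.ex_tstar ν)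

lemma tstar_le (ν : Fin c.G.n → Fin c.k) : c.tstar ν ≤ c.sr ν :=
  (Classical.choose_spec (c.ex_tstar ν)).1

lemma tstar_lt_Tv (ν : Fin c.G.n → Fin c.k) : c.tstar ν < c.Tv ν :=
  lt_of_le_of_lt (c.tstar_le ν) (c.sr_lt ν)

lemma tstar_max (ν : Fin c.G.n → Fin c.k) {t : ℕ} (ht : t ≤ c.sr ν) :
    (c.Btv ν t).card ≤ (c.Btv ν (c.tstar ν)).card :=
  (Classical.choose_spec (c.ex_tstar ν)).2 t ht

lemma children_root_mem (ν : Fin c.G.n → Fin c.k) {v : Fin c.G.n}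
    (hv : c.G.child v c.G.root) : v ∈ c.Btv ν (c.sr ν) := by
  obtain ⟨w, a, hq, hw⟩ := c.sr_query ν
  rw [mem_Btv]
  exact ⟨c.sr ν, le_rfl, ⟨c.sr_lt ν, w, a, hq, hw.symm ▸ hv⟩, fun s h1 h2 _ => by omega⟩

/-- The pebbling cost is at most the number of pebbles at the critical time. -/
lemma p_le_card (ν : Fin c.G.n → Fin c.k) :
    pebCost (Fin c.G.n) c.G.child c.G.root ≤ (c.Btv ν (c.tstar ν)).card := by
  set M := (c.Btv ν (c.tstar ν)).card with hM
  set Cfin : Finset (Fin c.G.n) :=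
    insert c.G.root (c.Btv ν (c.sr ν) \ Finset.univ.filter (fun v => c.G.child v c.G.root))
    with hCfin
  have hCfincard : Cfin.card ≤ M := by
    obtain ⟨v0, hv0⟩ := root_has_child c.G c.hn
    have hv0m : v0 ∈ c.Btv ν (c.sr ν) := c.children_root_mem ν hv0
    have hss : c.Btv ν (c.sr ν) \ Finset.univ.filter (fun v => c.G.child v c.G.root) ⊂
        c.Btv ν (c.sr ν) := by
      refine ⟨Finset.sdiff_subset, fun hsub => ?_⟩
      have := hsub hv0m
      rw [Finset.mem_sdiff, Finset.mem_filter] at this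
      exact this.2 ⟨Finset.mem_univ v0, hv0⟩
    calc Cfin.card ≤ (c.Btv ν (c.sr ν) \ _).card + 1 := Finset.card_insert_le _ _
    _ ≤ (c.Btv ν (c.sr ν)).card := by
        have := Finset.card_lt_card hss
        omega
    _ ≤ M := c.tstar_max ν le_rfl
  apply pebCost_le c.G.child M c.G.root
    (fun t => if t ≤ c.sr ν then c.Btv ν t else Cfin) (c.sr ν + 1)
  · rw [if_pos (Nat.zero_le _), Btv_zero]
  · rw [if_neg (by omega)]
    exact Finset.mem_insert_self _ _
  · intro t ht
    by_cases h1 : t + 1 ≤ c.sr ν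
    · rw [if_pos (by omega), if_pos h1]
      exact c.Btv_step ν t
    · have ht' : t = c.sr ν := by omega
      subst ht'
      rw [if_pos le_rfl, if_neg h1]
      left
      left
      refine ⟨c.G.root, Finset.univ.filter (fun v => c.G.child v c.G.root),
        fun v hv => c.children_root_mem ν hv, ?_, rfl⟩
      intro v hv
      rw [Finset.mem_filter] at hv
      exact hv.2
  · intro t ht
    by_cases h1 : t ≤ c.sr ν
    · rw [if_pos h1]
      exact c.tstar_max ν h1
    · rw [if_neg h1]
      exact hCfincard

end Ctx
end ThriftyLB5
section ThriftyLB6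
open Classical RootedDag BP

namespace Ctx
variable (c : Ctx)

/-- Query of `v`'s variable at offset `j` after the critical time. -/
def qrOff (ν : Fin c.G.n → Fin c.k) (v : Fin c.G.n) (j : ℕ) : Prop :=
  c.qrP ν v (c.tstar ν + j)

/-- `v` is needed at offset `j` after the critical time. -/
def ndOff (ν : Fin c.G.n → Fin c.k) (v : Fin c.G.n) (j : ℕ) : Prop :=
  c.ndP ν v (c.tstar ν + j)

def touched (ν : Fin c.G.n → Fin c.k) (v : Fin c.G.n) : Prop := ∃ j, c.qrOff ν v j

noncomputable def tau (ν : Fin c.G.n → Fin c.k) (v : Fin c.G.n) : ℕ :=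
  sInf {j | c.qrOff ν v j}

noncomputable def Ev (ν : Fin c.G.n → Fin c.k) : ℕ := c.Tv ν - c.tstar ν

noncomputable def keyv (ν : Fin c.G.n → Fin c.k) (v : Fin c.G.n) : ℕ :=
  (if c.touched ν v then c.tau ν v else c.Ev ν) * c.G.n + v.val

noncomputable def Cset (ν : Fin c.G.n → Fin c.k) : Finset (Fin c.G.n) :=
  Finset.univ \ c.Btv ν (c.tstar ν)

noncomputable def rank (ν : Fin c.G.n → Fin c.k) (v : Fin c.G.n) : ℕ :=
  ((c.Cset ν).filter (fun w => c.keyv ν w < c.keyv ν v)).card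

noncomputable def Lfun (ν : Fin c.G.n → Fin c.k) (m : ℕ) : Fin c.k :=
  if h : ∃ v, v ∈ c.Cset ν ∧ c.rank ν v = m then ν (Classical.choose h) else ⟨0, c.hk0⟩

lemma qrOff_lt_Ev {ν : Fin c.G.n → Fin c.k} {v : Fin c.G.n} {j : ℕ} (h : c.qrOff ν v j) :
    j < c.Ev ν := by
  have h1 := h.1
  have h2 := c.tstar_lt_Tv ν
  unfold Ev
  omega

lemma ndOff_lt_Ev {ν : Fin c.G.n → Fin c.k} {v : Fin c.G.n} {j : ℕ} (h : c.ndOff ν v j) :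
    j < c.Ev ν := by
  have h1 := h.1
  unfold Ev
  omega

lemma tau_mem {ν : Fin c.G.n → Fin c.k} {v : Fin c.G.n} (h : c.touched ν v) :
    c.qrOff ν v (c.tau ν v) := Nat.sInf_mem h

lemma tau_le {ν : Fin c.G.n → Fin c.k} {v : Fin c.G.n} {j : ℕ} (h : c.qrOff ν v j) :
    c.tau ν v ≤ j := Nat.sInf_le h

lemma qrOff_unique {ν : Fin c.G.n → Fin c.k} {v w : Fin c.G.n} {j : ℕ}
    (h1 : c.qrOff ν v j) (h2 : c.qrOff ν w j) : v = w := h1.2.symm.trans h2.2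

/-- Membership in the critical configuration, in offset form. -/
lemma mem_Btv_tstar {ν : Fin c.G.n → Fin c.k} {v : Fin c.G.n} :
    v ∈ c.Btv ν (c.tstar ν) ↔
      ∃ j, c.ndOff ν v j ∧ ∀ j', j' < j → ¬ c.qrOff ν v j' := by
  rw [mem_Btv]
  constructor
  · rintro ⟨r, hr1, hnd, hgap⟩
    refine ⟨r - c.tstar ν, ?_, ?_⟩
    · unfold ndOff
      have : c.tstar ν + (r - c.tstar ν) = r := by omega
      rw [this]
      exact hnd
    · intro j' hj' hq
      exact hgap (c.tstar ν + j') (by omega) (by omega) hq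
  · rintro ⟨j, hnd, hgap⟩
    refine ⟨c.tstar ν + j, by omega, hnd, ?_⟩
    intro s hs1 hs2 hq
    have : s = c.tstar ν + (s - c.tstar ν) := by omega
    refine hgap (s - c.tstar ν) (by omega) ?_
    show c.qrP ν v (c.tstar ν + (s - c.tstar ν))
    rw [← this]
    exact hq

lemma keyv_inj {ν : Fin c.G.n → Fin c.k} {v w : Fin c.G.n}
    (h : c.keyv ν v = c.keyv ν w) : v = w := by
  have hv : c.keyv ν v % c.G.n = v.val := by
    unfold keyv
    rw [Nat.mul_comm, Nat.mul_add_mod]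
    exact Nat.mod_eq_of_lt v.isLt
  have hw : c.keyv ν w % c.G.n = w.val := by
    unfold keyv
    rw [Nat.mul_comm, Nat.mul_add_mod]
    exact Nat.mod_eq_of_lt w.isLt
  apply Fin.ext
  rw [← hv, ← hw, h]

lemma rank_lt_rank {ν : Fin c.G.n → Fin c.k} {v w : Fin c.G.n} (hv : v ∈ c.Cset ν)
    (h : c.keyv ν v < c.keyv ν w) : c.rank ν v < c.rank ν w := by
  apply Finset.card_lt_card
  constructor
  · intro x hx
    rw [Finset.mem_filter] at hx ⊢
    exact ⟨hx.1, lt_trans hx.2 h⟩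
  · intro hsub
    have : v ∈ (c.Cset ν).filter (fun x => c.keyv ν x < c.keyv ν w) :=
      Finset.mem_filter.mpr ⟨hv, h⟩
    have := hsub this
    rw [Finset.mem_filter] at this
    omega

lemma rank_inj {ν : Fin c.G.n → Fin c.k} {v w : Fin c.G.n} (hv : v ∈ c.Cset ν)
    (hw : w ∈ c.Cset ν) (h : c.rank ν v = c.rank ν w) : v = w := by
  rcases lt_trichotomy (c.keyv ν v) (c.keyv ν w) with hk | hk | hk
  · exact absurd h (Nat.ne_of_lt (c.rank_lt_rank hv hk))
  · exact c.keyv_inj hk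
  · exact absurd h.symm (Nat.ne_of_lt (c.rank_lt_rank hw hk))

lemma p_le_card' (ν : Fin c.G.n → Fin c.k) : c.p ≤ (c.Btv ν (c.tstar ν)).card :=
  c.hp ▸ c.p_le_card ν

lemma rank_lt_np {ν : Fin c.G.n → Fin c.k} {v : Fin c.G.n} (hv : v ∈ c.Cset ν) :
    c.rank ν v < c.G.n - c.p := by
  have h1 : c.rank ν v < (c.Cset ν).card := by
    apply Finset.card_lt_card
    constructor
    · exact Finset.filter_subset _ _
    · intro hsub
      have := hsub hv
      rw [Finset.mem_filter] at this
      omega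
  have h2 : (c.Cset ν).card = c.G.n - (c.Btv ν (c.tstar ν)).card := by
    unfold Cset
    rw [Finset.card_univ_diff]
    simp
  have h3 := c.p_le_card' ν
  have h4 : (c.Btv ν (c.tstar ν)).card ≤ c.G.n :=
    le_trans (Finset.card_le_card (Finset.subset_univ _)) (by simp)
  omega

lemma Lfun_rank {ν : Fin c.G.n → Fin c.k} {v : Fin c.G.n} (hv : v ∈ c.Cset ν) :
    c.Lfun ν (c.rank ν v) = ν v := by
  unfold Lfun
  have h : ∃ w, w ∈ c.Cset ν ∧ c.rank ν w = c.rank ν v := ⟨v, hv, rfl⟩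
  rw [dif_pos h]
  obtain ⟨hw1, hw2⟩ := Classical.choose_spec h
  rw [c.rank_inj hw1 hv hw2]

end Ctx
end ThriftyLB6
section ThriftyLB7
open Classical RootedDag BP

namespace Ctx
variable (c : Ctx)

section Transfer
variable {ν ν' : Fin c.G.n → Fin c.k} {m : ℕ}

lemma qr_transfer
    (AG : ∀ i, i ≤ m → c.B.path (c.inp ν) (c.tstar ν + i) = c.B.path (c.inp ν') (c.tstar ν' + i))
    {j : ℕ} (hj : j ≤ m) (hb2 : c.tstar ν' + j < c.Tv ν') {v : Fin c.G.n}
    (h : c.qrOff ν v j) : c.qrOff ν' v j := by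
  refine ⟨hb2, ?_⟩
  rw [← AG j hj]
  exact h.2

lemma nd_transfer
    (AG : ∀ i, i ≤ m → c.B.path (c.inp ν) (c.tstar ν + i) = c.B.path (c.inp ν') (c.tstar ν' + i))
    {j : ℕ} (hj : j ≤ m) (hb2 : c.tstar ν' + j < c.Tv ν') {v : Fin c.G.n}
    (h : c.ndOff ν v j) : c.ndOff ν' v j := by
  refine ⟨hb2, ?_⟩
  rw [← AG j hj]
  exact h.2

lemma tau_eq
    (AG : ∀ i, i ≤ m → c.B.path (c.inp ν) (c.tstar ν + i) = c.B.path (c.inp ν') (c.tstar ν' + i))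
    {j : ℕ} (hj : j ≤ m) (hb2 : c.tstar ν' + j < c.Tv ν') {v : Fin c.G.n}
    (h : c.qrOff ν v j) : c.touched ν' v ∧ c.tau ν' v = c.tau ν v := by
  have hτ : c.touched ν v := ⟨j, h⟩
  have hτm : c.qrOff ν v (c.tau ν v) := c.tau_mem hτ
  have hτle : c.tau ν v ≤ j := c.tau_le h
  have hq' : c.qrOff ν' v (c.tau ν v) :=
    c.qr_transfer AG (by omega) (by omega) hτm
  have hτ' : c.touched ν' v := ⟨_, hq'⟩
  refine ⟨hτ', ?_⟩
  have h1 : c.tau ν' v ≤ c.tau ν v := c.tau_le hq'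
  rcases Nat.eq_or_lt_of_le h1 with he | hlt
  · exact he
  · exfalso
    have hq2 : c.qrOff ν' v (c.tau ν' v) := c.tau_mem hτ'
    have hback : c.qrOff ν v (c.tau ν' v) := by
      refine c.qr_transfer (fun i hi => (AG i hi).symm) (by omega) ?_ hq2
      have := hτm.1
      omega
    have := c.tau_le hback
    omega

lemma mem_of
    (AG : ∀ i, i ≤ m → c.B.path (c.inp ν) (c.tstar ν + i) = c.B.path (c.inp ν') (c.tstar ν' + i))
    {j : ℕ} (hj : j ≤ m) (hb2 : c.tstar ν' + j < c.Tv ν') {v : Fin c.G.n}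
    (h : c.qrOff ν v j) (hmem : v ∈ c.Btv ν (c.tstar ν)) : v ∈ c.Btv ν' (c.tstar ν') := by
  rw [c.mem_Btv_tstar] at hmem ⊢
  obtain ⟨jx, hnd, hgap⟩ := hmem
  have hτ : c.touched ν v := ⟨j, h⟩
  have hτm : c.qrOff ν v (c.tau ν v) := c.tau_mem hτ
  have hτle : c.tau ν v ≤ j := c.tau_le h
  have hjx1 : jx ≤ c.tau ν v := by
    by_contra hlt
    push_neg at hlt
    exact hgap _ hlt hτm
  have hjxne : jx ≠ c.tau ν v := by
    intro he
    exact c.qrP_ndP_ne hτm (he ▸ hnd)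
  have hjxm : jx < c.tau ν v := lt_of_le_of_ne hjx1 hjxne
  refine ⟨jx, c.nd_transfer AG (by omega) (by omega) hnd, ?_⟩
  intro j' hj' hq'
  have hbv : c.tstar ν + j' < c.Tv ν := by
    have := hτm.1
    omega
  exact hgap j' hj' (c.qr_transfer (fun i hi => (AG i hi).symm) (by omega) hbv hq')

lemma reveal_val_eq
    (AG : ∀ i, i ≤ m → c.B.path (c.inp ν) (c.tstar ν + i) = c.B.path (c.inp ν') (c.tstar ν' + i))
    {u : Fin c.G.n} {jx : ℕ} (hjx : jx ≤ m) (hb2 : c.tstar ν' + jx < c.Tv ν')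
    (hnd : c.ndOff ν u jx) : ν u = ν' u := by
  obtain ⟨hlt, w, a, hq, hc⟩ := hnd
  have h1 := c.hthrifty (c.inp ν) _ w a
    ⟨c.tstar ν + jx, c.vis ν (le_of_lt hlt), rfl⟩ hq ⟨u, hc⟩
  have hq' : c.B.query (c.B.path (c.inp ν') (c.tstar ν' + jx)) = Sum.inr ⟨w, a⟩ := by
    rw [← AG jx hjx]
    exact hq
  have h2 := c.hthrifty (c.inp ν') _ w a
    ⟨c.tstar ν' + jx, c.vis ν' (le_of_lt hb2), rfl⟩ hq' ⟨u, hc⟩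
  have e1 : a ⟨u, hc⟩ = ν u := h1.trans (c.val_inp ν u)
  have e2 : a ⟨u, hc⟩ = ν' u := h2.trans (c.val_inp ν' u)
  rw [← e1, e2]

end Transfer

lemma npos : 0 < c.G.n := lt_of_lt_of_le (by omega) c.hn

lemma key_arith {a b x y : ℕ} (hn : 0 < c.G.n) (hab : a < b) (hx : x < c.G.n) :
    a * c.G.n + x < b * c.G.n + y := by
  have h1 : a * c.G.n + x < (a + 1) * c.G.n := by
    rw [Nat.add_mul, Nat.one_mul]
    omega
  have h2 : (a + 1) * c.G.n ≤ b * c.G.n := Nat.mul_le_mul_right _ (by omega)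
  omega

lemma key_lt_iff_of_touched {ν : Fin c.G.n → Fin c.k} {u w : Fin c.G.n}
    (hτu : c.touched ν u) (hne : w ≠ u) :
    c.keyv ν w < c.keyv ν u ↔ c.touched ν w ∧ c.tau ν w < c.tau ν u := by
  have hn := c.npos
  have hτlt : c.tau ν u < c.Ev ν := c.qrOff_lt_Ev (c.tau_mem hτu)
  unfold keyv
  rw [if_pos hτu]
  by_cases hτw : c.touched ν w
  · rw [if_pos hτw]
    constructor
    · intro hlt
      refine ⟨hτw, ?_⟩
      rcases lt_trichotomy (c.tau ν w) (c.tau ν u) with h | h | h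
      · exact h
      · exact absurd (c.qrOff_unique (h ▸ c.tau_mem hτw) (c.tau_mem hτu)) hne
      · exact absurd hlt (not_lt_of_gt (c.key_arith hn h u.isLt))
    · rintro ⟨-, h⟩
      exact c.key_arith hn h w.isLt
  · rw [if_neg hτw]
    constructor
    · intro hlt
      exact absurd hlt (not_lt_of_gt (c.key_arith hn hτlt u.isLt))
    · tauto

lemma key_lt_iff_of_untouched {ν : Fin c.G.n → Fin c.k} {u w : Fin c.G.n}
    (hτu : ¬ c.touched ν u) :
    c.keyv ν w < c.keyv ν u ↔ c.touched ν w ∨ (¬ c.touched ν w ∧ w.val < u.val) := by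
  have hn := c.npos
  unfold keyv
  rw [if_neg hτu]
  by_cases hτw : c.touched ν w
  · rw [if_pos hτw]
    have hτlt : c.tau ν w < c.Ev ν := c.qrOff_lt_Ev (c.tau_mem hτw)
    constructor
    · intro _
      exact Or.inl hτw
    · intro _
      exact c.key_arith hn hτlt w.isLt
  · rw [if_neg hτw]
    constructor
    · intro hlt
      exact Or.inr ⟨hτw, by omega⟩
    · rintro (h | ⟨-, h⟩)
      · exact absurd h hτw
      · omega

end Ctx
end ThriftyLB7
section ThriftyLB8
open Classical RootedDag BP

namespace Ctx
variable (c : Ctx)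

section Transfer2
variable {ν ν' : Fin c.G.n → Fin c.k} {m : ℕ}

lemma rank_eq_touched
    (AG : ∀ i, i ≤ m → c.B.path (c.inp ν) (c.tstar ν + i) = c.B.path (c.inp ν') (c.tstar ν' + i))
    {j : ℕ} (hj : j ≤ m) (hb2 : c.tstar ν' + j < c.Tv ν') {u : Fin c.G.n}
    (hqu : c.qrOff ν u j) (hu : u ∈ c.Cset ν) (hu' : u ∈ c.Cset ν') :
    c.rank ν u = c.rank ν' u := by
  have AGs : ∀ i, i ≤ m →
      c.B.path (c.inp ν') (c.tstar ν' + i) = c.B.path (c.inp ν) (c.tstar ν + i) :=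
    fun i hi => (AG i hi).symm
  have hτu : c.touched ν u := ⟨j, hqu⟩
  have hqτ : c.qrOff ν u (c.tau ν u) := c.tau_mem hτu
  have hτle : c.tau ν u ≤ j := c.tau_le hqu
  have htv : c.tstar ν + c.tau ν u < c.Tv ν := hqτ.1
  have hte := c.tau_eq AG hj hb2 hqu
  unfold rank
  congr 1
  ext w
  simp only [Finset.mem_filter]
  by_cases hwu : w = u
  · subst hwu
    constructor <;> (rintro ⟨_, hlt⟩; omega)
  constructor
  · rintro ⟨hwC, hklt⟩
    obtain ⟨hτw, hτwlt⟩ := (c.key_lt_iff_of_touched hτu hwu).mp hklt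
    have hqw : c.qrOff ν w (c.tau ν w) := c.tau_mem hτw
    have hbw : c.tstar ν' + c.tau ν w < c.Tv ν' := by omega
    have hτw' := c.tau_eq AG (by omega) hbw hqw
    refine ⟨?_, ?_⟩
    · unfold Cset at hwC ⊢
      rw [Finset.mem_sdiff] at hwC ⊢
      refine ⟨Finset.mem_univ _, fun hmem' => hwC.2 ?_⟩
      have hqw' : c.qrOff ν' w (c.tau ν w) := c.qr_transfer AG (by omega) hbw hqw
      have hbv : c.tstar ν + c.tau ν w < c.Tv ν := hqw.1
      exact c.mem_of AGs (by omega) hbv hqw' hmem'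
    · rw [c.key_lt_iff_of_touched hte.1 hwu]
      refine ⟨hτw'.1, ?_⟩
      rw [hτw'.2, hte.2]
      exact hτwlt
  · rintro ⟨hwC, hklt⟩
    obtain ⟨hτw, hτwlt⟩ := (c.key_lt_iff_of_touched hte.1 hwu).mp hklt
    rw [hte.2] at hτwlt
    have hqw : c.qrOff ν' w (c.tau ν' w) := c.tau_mem hτw
    have hbw : c.tstar ν + c.tau ν' w < c.Tv ν := by omega
    have hτw' := c.tau_eq AGs (by omega) hbw hqw
    refine ⟨?_, ?_⟩
    · unfold Cset at hwC ⊢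
      rw [Finset.mem_sdiff] at hwC ⊢
      refine ⟨Finset.mem_univ _, fun hmem' => hwC.2 ?_⟩
      have hqw' : c.qrOff ν w (c.tau ν' w) := c.qr_transfer AGs (by omega) hbw hqw
      have hbv : c.tstar ν' + c.tau ν' w < c.Tv ν' := hqw.1
      exact c.mem_of AG (by omega) hbv hqw' hmem'
    · rw [c.key_lt_iff_of_touched hτu hwu]
      refine ⟨hτw'.1, ?_⟩
      rw [hτw'.2]
      exact hτwlt

lemma node_val_eq
    (AG : ∀ i, i ≤ m → c.B.path (c.inp ν) (c.tstar ν + i) = c.B.path (c.inp ν') (c.tstar ν' + i))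
    (hL : ∀ i, i < c.G.n - c.p → c.Lfun ν i = c.Lfun ν' i)
    (hb : c.tstar ν + m < c.Tv ν) (hb' : c.tstar ν' + m < c.Tv ν') :
    c.inp ν (c.B.query (c.B.path (c.inp ν) (c.tstar ν + m))) =
      c.inp ν' (c.B.query (c.B.path (c.inp ν') (c.tstar ν' + m))) := by
  have AGs : ∀ i, i ≤ m →
      c.B.path (c.inp ν') (c.tstar ν' + i) = c.B.path (c.inp ν) (c.tstar ν + i) :=
    fun i hi => (AG i hi).symm
  have hqv : c.qrOff ν (nodeOf (c.B.query (c.B.path (c.inp ν) (c.tstar ν + m)))) m :=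
    ⟨hb, rfl⟩
  have hqv' : c.qrOff ν' (nodeOf (c.B.query (c.B.path (c.inp ν) (c.tstar ν + m)))) m :=
    c.qr_transfer AG le_rfl hb' hqv
  have e1 := c.onpath_query_val ν (s := c.tstar ν + m) (le_of_lt hb)
  have e2 := c.onpath_query_val ν' (s := c.tstar ν' + m) (le_of_lt hb')
  rw [e1, e2, hqv'.2]
  set u := nodeOf (c.B.query (c.B.path (c.inp ν) (c.tstar ν + m))) with hu
  show ν u = ν' u
  by_cases hmem : u ∈ c.Btv ν (c.tstar ν)
  · obtain ⟨jx, hnd, hgap⟩ := (c.mem_Btv_tstar).mp hmem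
    have hjxle : jx ≤ m := by
      by_contra hc
      push_neg at hc
      exact hgap m hc hqv
    have hne : jx ≠ m := fun he => c.qrP_ndP_ne hqv (he ▸ hnd)
    exact c.reveal_val_eq AG (by omega) (by omega) hnd
  by_cases hmem' : u ∈ c.Btv ν' (c.tstar ν')
  · obtain ⟨jx, hnd, hgap⟩ := (c.mem_Btv_tstar).mp hmem'
    have hjxle : jx ≤ m := by
      by_contra hc
      push_neg at hc
      exact hgap m hc hqv'
    have hne : jx ≠ m := fun he => c.qrP_ndP_ne hqv' (he ▸ hnd)
    exact (c.reveal_val_eq AGs (by omega) (by omega) hnd).symm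
  · have huC : u ∈ c.Cset ν := by
      unfold Cset
      rw [Finset.mem_sdiff]
      exact ⟨Finset.mem_univ _, hmem⟩
    have huC' : u ∈ c.Cset ν' := by
      unfold Cset
      rw [Finset.mem_sdiff]
      exact ⟨Finset.mem_univ _, hmem'⟩
    have hrank := c.rank_eq_touched AG le_rfl hb' hqv huC huC'
    have h1 : c.Lfun ν (c.rank ν u) = ν u := c.Lfun_rank huC
    have h2 : c.Lfun ν' (c.rank ν' u) = ν' u := c.Lfun_rank huC'
    rw [← h1, hL _ (c.rank_lt_np huC), hrank, h2]

end Transfer2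

lemma agree {ν ν' : Fin c.G.n → Fin c.k}
    (hq : c.B.path (c.inp ν) (c.tstar ν) = c.B.path (c.inp ν') (c.tstar ν'))
    (hL : ∀ i, i < c.G.n - c.p → c.Lfun ν i = c.Lfun ν' i) :
    ∀ m, c.tstar ν + m ≤ c.Tv ν → c.tstar ν' + m ≤ c.Tv ν' →
      c.B.path (c.inp ν) (c.tstar ν + m) = c.B.path (c.inp ν') (c.tstar ν' + m) := by
  intro m
  induction m using Nat.strong_induction_on with
  | _ m IH =>
    intro h1 h2
    match m with
    | 0 => simpa using hq
    | mm + 1 =>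
      have AG : ∀ i, i ≤ mm →
          c.B.path (c.inp ν) (c.tstar ν + i) = c.B.path (c.inp ν') (c.tstar ν' + i) :=
        fun i hi => IH i (by omega) (by omega) (by omega)
      have hstep := c.node_val_eq AG hL (by omega) (by omega)
      show c.B.path (c.inp ν) ((c.tstar ν + mm) + 1) =
        c.B.path (c.inp ν') ((c.tstar ν' + mm) + 1)
      rw [c.B.path_succ, c.B.path_succ, hstep, AG mm le_rfl]

lemma tstar_add_Ev (ν : Fin c.G.n → Fin c.k) : c.tstar ν + c.Ev ν = c.Tv ν := by
  have := c.tstar_lt_Tv ν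
  unfold Ev
  omega

lemma Ev_le {ν ν' : Fin c.G.n → Fin c.k}
    (hq : c.B.path (c.inp ν) (c.tstar ν) = c.B.path (c.inp ν') (c.tstar ν'))
    (hL : ∀ i, i < c.G.n - c.p → c.Lfun ν i = c.Lfun ν' i) :
    c.Ev ν' ≤ c.Ev ν := by
  by_contra hcon
  push_neg at hcon
  have e1 := c.tstar_add_Ev ν
  have e1' := c.tstar_add_Ev ν'
  have hpe := c.agree hq hL (c.Ev ν) (by omega) (by omega)
  have h1 := c.Tv_out ν
  rw [← e1] at h1
  rw [hpe] at h1
  have h2 := c.Tv_vis ν' (c.tstar ν' + c.Ev ν) (by omega)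
  rw [h1] at h2
  cases h2

lemma Ev_eq {ν ν' : Fin c.G.n → Fin c.k}
    (hq : c.B.path (c.inp ν) (c.tstar ν) = c.B.path (c.inp ν') (c.tstar ν'))
    (hL : ∀ i, i < c.G.n - c.p → c.Lfun ν i = c.Lfun ν' i) :
    c.Ev ν = c.Ev ν' :=
  le_antisymm (c.Ev_le hq.symm (fun i hi => (hL i hi).symm)) (c.Ev_le hq hL)

lemma rank_eq_untouched {ν ν' : Fin c.G.n → Fin c.k}
    (AG : ∀ i, i ≤ c.Ev ν →
      c.B.path (c.inp ν) (c.tstar ν + i) = c.B.path (c.inp ν') (c.tstar ν' + i))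
    (hE : c.Ev ν = c.Ev ν') {u : Fin c.G.n}
    (hτu : ¬ c.touched ν u) (hu : u ∈ c.Cset ν) (hu' : u ∈ c.Cset ν') :
    c.rank ν u = c.rank ν' u := by
  have e1 := c.tstar_add_Ev ν
  have e1' := c.tstar_add_Ev ν'
  have AGs : ∀ i, i ≤ c.Ev ν' →
      c.B.path (c.inp ν') (c.tstar ν' + i) = c.B.path (c.inp ν) (c.tstar ν + i) :=
    fun i hi => (AG i (by omega)).symm
  have htrans : ∀ w, c.touched ν w ↔ c.touched ν' w := by
    intro w
    constructor
    · rintro ⟨j, hj⟩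
      have hjE := c.qrOff_lt_Ev hj
      exact ⟨j, c.qr_transfer AG (by omega) (by omega) hj⟩
    · rintro ⟨j, hj⟩
      have hjE := c.qrOff_lt_Ev hj
      exact ⟨j, c.qr_transfer AGs (by omega) (by omega) hj⟩
  have hτu' : ¬ c.touched ν' u := fun h => hτu ((htrans u).mpr h)
  have hmemiff : ∀ w, w ∈ c.Btv ν (c.tstar ν) ↔ w ∈ c.Btv ν' (c.tstar ν') := by
    intro w
    by_cases hτw : c.touched ν w
    · have hqw := c.tau_mem hτw
      have hjE := c.qrOff_lt_Ev hqw
      have hqw' : c.qrOff ν' w (c.tau ν w) := c.qr_transfer AG (by omega) (by omega) hqw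
      constructor
      · exact c.mem_of AG (by omega) (by omega) hqw
      · exact c.mem_of AGs (le_of_lt (by omega)) (by omega) hqw'
    · have hτw' : ¬ c.touched ν' w := fun h => hτw ((htrans w).mpr h)
      rw [c.mem_Btv_tstar, c.mem_Btv_tstar]
      constructor
      · rintro ⟨j, hnd, -⟩
        have hjE := c.ndOff_lt_Ev hnd
        exact ⟨j, c.nd_transfer AG (by omega) (by omega) hnd,
          fun j' _ hq' => hτw' ⟨j', hq'⟩⟩
      · rintro ⟨j, hnd, -⟩
        have hjE := c.ndOff_lt_Ev hnd
        exact ⟨j, c.nd_transfer AGs (by omega) (by omega) hnd,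
          fun j' _ hq' => hτw ⟨j', hq'⟩⟩
  have hCiff : ∀ w, w ∈ c.Cset ν ↔ w ∈ c.Cset ν' := by
    intro w
    unfold Cset
    rw [Finset.mem_sdiff, Finset.mem_sdiff]
    constructor
    · rintro ⟨-, h⟩
      exact ⟨Finset.mem_univ _, fun h' => h ((hmemiff w).mpr h')⟩
    · rintro ⟨-, h⟩
      exact ⟨Finset.mem_univ _, fun h' => h ((hmemiff w).mp h')⟩
  unfold rank
  congr 1
  ext w
  simp only [Finset.mem_filter]
  rw [c.key_lt_iff_of_untouched hτu, c.key_lt_iff_of_untouched hτu', hCiff w]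
  constructor
  · rintro ⟨h1, h2 | ⟨h3, h4⟩⟩
    · exact ⟨h1, Or.inl ((htrans w).mp h2)⟩
    · exact ⟨h1, Or.inr ⟨fun h => h3 ((htrans w).mpr h), h4⟩⟩
  · rintro ⟨h1, h2 | ⟨h3, h4⟩⟩
    · exact ⟨h1, Or.inl ((htrans w).mpr h2)⟩
    · exact ⟨h1, Or.inr ⟨fun h => h3 ((htrans w).mp h), h4⟩⟩

/-- The injectivity of the bottleneck map. -/
lemma nu_eq {ν ν' : Fin c.G.n → Fin c.k}
    (hq : c.B.path (c.inp ν) (c.tstar ν) = c.B.path (c.inp ν') (c.tstar ν'))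
    (hL : ∀ i, i < c.G.n - c.p → c.Lfun ν i = c.Lfun ν' i) :
    ν = ν' := by
  have hE := c.Ev_eq hq hL
  have e1 := c.tstar_add_Ev ν
  have e1' := c.tstar_add_Ev ν'
  have AG : ∀ i, i ≤ c.Ev ν →
      c.B.path (c.inp ν) (c.tstar ν + i) = c.B.path (c.inp ν') (c.tstar ν' + i) :=
    fun i hi => c.agree hq hL i (by omega) (by omega)
  have AGs : ∀ i, i ≤ c.Ev ν' →
      c.B.path (c.inp ν') (c.tstar ν' + i) = c.B.path (c.inp ν) (c.tstar ν + i) :=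
    fun i hi => (AG i (by omega)).symm
  funext u
  by_cases hmem : u ∈ c.Btv ν (c.tstar ν)
  · obtain ⟨jx, hnd, -⟩ := (c.mem_Btv_tstar).mp hmem
    have hjE := c.ndOff_lt_Ev hnd
    exact c.reveal_val_eq AG (by omega) (by omega) hnd
  by_cases hmem' : u ∈ c.Btv ν' (c.tstar ν')
  · obtain ⟨jx, hnd, -⟩ := (c.mem_Btv_tstar).mp hmem'
    have hjE := c.ndOff_lt_Ev hnd
    exact (c.reveal_val_eq AGs (by omega) (by omega) hnd).symm
  · have huC : u ∈ c.Cset ν := by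
      unfold Cset
      rw [Finset.mem_sdiff]
      exact ⟨Finset.mem_univ _, hmem⟩
    have huC' : u ∈ c.Cset ν' := by
      unfold Cset
      rw [Finset.mem_sdiff]
      exact ⟨Finset.mem_univ _, hmem'⟩
    have hrank : c.rank ν u = c.rank ν' u := by
      by_cases hτ : c.touched ν u
      · have hqτ := c.tau_mem hτ
        have hjE := c.qrOff_lt_Ev hqτ
        exact c.rank_eq_touched AG (by omega) (by omega) hqτ huC huC'
      · exact c.rank_eq_untouched AG hE hτ huC huC'
    rw [← c.Lfun_rank huC, hL _ (c.rank_lt_np huC), hrank, c.Lfun_rank huC']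

end Ctx
end ThriftyLB8
/-- Every thrifty deterministic `k`-way branching program that computes `DE^G_k` correctly on
all hard inputs `D_{G,k}` has at least `k^p` states, where `p` is the black pebbling cost of
the connected rooted dag `G` with at least two nodes. -/
theorem stmt11 (G : RootedDag) (hn : 2 ≤ G.n) (k : ℕ) (hk : 2 ≤ k) (p : ℕ)
    (hp : pebCost (Fin G.n) G.child G.root = p)
    (B : BP (G.Var k) k Bool)
    (hsolve : G.SolvesDEOn (by omega) B (G.HardInputs (by omega)))
    (hthrifty : G.Thrifty B) :
    k ^ p ≤ B.size := by
  classical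
  have hk0 : 0 < k := by omega
  let c : Ctx := ⟨G, k, hk, hn, B, hk0, hsolve, hthrifty, p, hp⟩
  letI : Fintype B.State := B.finState
  have hinj : Function.Injective (fun ν : Fin G.n → Fin k =>
      ((c.B.path (c.inp ν) (c.tstar ν) : B.State),
        fun i : Fin (G.n - p) => c.Lfun ν i.val)) := by
    intro ν ν' h
    rw [Prod.mk.injEq] at h
    exact c.nu_eq h.1 (fun i hi => congrFun h.2 ⟨i, hi⟩)
  have hcard := Fintype.card_le_of_injective _ hinj
  rw [Fintype.card_prod, Fintype.card_fun, Fintype.card_fun] at hcard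
  simp only [Fintype.card_fin] at hcard
  have hsize : B.size = Fintype.card B.State := rfl
  have hpn : p ≤ G.n := by
    have h1 := c.p_le_card' (fun _ => ⟨0, hk0⟩)
    have h2 : (c.Btv (fun _ => ⟨0, hk0⟩) (c.tstar (fun _ => ⟨0, hk0⟩))).card ≤ G.n := by
      have := Finset.card_le_card (Finset.subset_univ
        (c.Btv (fun _ => ⟨0, hk0⟩) (c.tstar (fun _ => ⟨0, hk0⟩))))
      simpa using this
    exact le_trans h1 h2
  have hsplit : k ^ G.n = k ^ p * k ^ (G.n - p) := by
    rw [← pow_add]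
    congr 1
    omega
  rw [hsplit] at hcard
  have hpos : 0 < k ^ (G.n - p) := Nat.pow_pos hk0
  rw [hsize]
  exact Nat.le_of_mul_le_mul_right hcard hpos
end

section
/- Let B be a deterministic thrifty BP computing DE^G_k correctly on the hard inputs D_{G,k}. Then for any I ∈ D_{G,k} and non-leaf node u, some state on I's computation path queries the thrifty u-variable of I, and for every such state q and each child v of u, some earlier state on I's path queries the v-variable of I. -/
/-- State `q` queries the `u`-variable of input `I`: the leaf variable `l_u` if `u` is a leaf,
or the thrifty variable `f_u(val(v₁)[I], …)` if `u` is internal. -/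
def QueriesNode (G : RootedDag) {k : ℕ} (B : BP (G.Var k) k Bool)
    (I : G.Var k → Fin k) (q : B.State) (u : Fin G.n) : Prop :=
  (∃ h : G.IsLeaf u, B.query q = Sum.inl ⟨u, h⟩) ∨
  (∃ h : ¬ G.IsLeaf u, B.query q = Sum.inr ⟨⟨u, h⟩, fun v => G.val I v.1⟩)

section Aux

open Classical in
theorem RootedDag.val_leaf (G : RootedDag) {k : ℕ} (I : G.Var k → Fin k)
    {u : Fin G.n} (h : G.IsLeaf u) : G.val I u = I (Sum.inl ⟨u, h⟩) := by
  rw [RootedDag.val, WellFounded.fix_eq]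
  simp [h]

open Classical in
theorem RootedDag.val_internal (G : RootedDag) {k : ℕ} (I : G.Var k → Fin k)
    {u : Fin G.n} (h : ¬ G.IsLeaf u) :
    G.val I u = I (Sum.inr ⟨⟨u, h⟩, fun v => G.val I v.1⟩) := by
  conv_lhs => rw [RootedDag.val, WellFounded.fix_eq]
  simp only [h, dif_neg, not_false_iff]
  rfl

theorem BP.visitsAt_mono_s12 {Var Out : Type} {k : ℕ} (B : BP Var k Out)
    (I : Var → Fin k) {s t : ℕ} (h : B.VisitsAt I t) (hst : s ≤ t) :
    B.VisitsAt I s := fun r hr => h r (lt_of_lt_of_le hr hst)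

theorem BP.path_eq_of_agree {Var Out : Type} {k : ℕ} (B : BP Var k Out)
    (I J : Var → Fin k) (t : ℕ)
    (h : ∀ s < t, J (B.query (B.path I s)) = I (B.query (B.path I s))) :
    ∀ s ≤ t, B.path J s = B.path I s := by
  intro s hs
  induction s with
  | zero => rfl
  | succ s ih =>
    have h1 : B.path J s = B.path I s := ih (le_of_lt (Nat.lt_of_succ_le hs))
    show B.next (B.path J s) (J (B.query (B.path J s))) = _
    rw [h1, h s (Nat.lt_of_succ_le hs)]
    rfl

theorem RootedDag.child_irrefl_s12 (G : RootedDag) (u : Fin G.n) : ¬ G.child u u := by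
  induction u using G.wf.induction with
  | _ a ih => exact fun h => ih a h h

theorem wf_irrefl {α : Type*} {r : α → α → Prop} (hwf : WellFounded r) (a : α) : ¬ r a a := by
  induction a using hwf.induction with
  | _ a ih => exact fun h => ih a h h

theorem RootedDag.swap_wf (G : RootedDag) :
    WellFounded (fun a b => G.child b a) := by
  have htc : WellFounded (Relation.TransGen G.child) := G.wf.transGen
  have : IsIrrefl (Fin G.n) (Relation.TransGen (fun a b => G.child b a)) := by
    constructor
    intro a ha
    exact wf_irrefl htc a ((Relation.transGen_swap).mp ha)
  have h2 : WellFounded (Relation.TransGen (fun a b => G.child b a)) :=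
    Finite.wellFounded_of_trans_of_irrefl _
  exact Subrelation.wf (q := fun a b => G.child b a)
    (r := Relation.TransGen fun a b => G.child b a)
    (fun h => Relation.TransGen.single (r := fun a b => G.child b a) h) h2

end Aux


/-- The modified input: set the value of node `v` to `b'`, and repair each parent function
so that all other node values are unchanged and hardness is preserved. -/
noncomputable def RootedDag.modify (G : RootedDag) {k : ℕ} (I : G.Var k → Fin k)
    (v : Fin G.n) (b' z : Fin k) : G.Var k → Fin k := by
  classical
  exact fun x =>
    match x with
    | Sum.inl l => if l.1 = v then b' else I (Sum.inl l)
    | Sum.inr ⟨w, a⟩ =>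
      if w.1 = v then
        (if a = (fun y => G.val I y.1) then b' else I (Sum.inr ⟨w, a⟩))
      else if G.child v w.1 then
        (if a = (fun y => if y.1 = v then b' else G.val I y.1) then G.val I w.1
         else if a = (fun y => G.val I y.1) then z
         else I (Sum.inr ⟨w, a⟩))
      else I (Sum.inr ⟨w, a⟩)

open Classical in
theorem RootedDag.modify_inl (G : RootedDag) {k : ℕ} (I : G.Var k → Fin k)
    (v : Fin G.n) (b' z : Fin k) (l : {u : Fin G.n // G.IsLeaf u}) :
    G.modify I v b' z (Sum.inl l) = if l.1 = v then b' else I (Sum.inl l) := rfl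

open Classical in
theorem RootedDag.modify_inr (G : RootedDag) {k : ℕ} (I : G.Var k → Fin k)
    (v : Fin G.n) (b' z : Fin k) (w : {u : Fin G.n // ¬ G.IsLeaf u})
    (a : {y : Fin G.n // G.child y w.1} → Fin k) :
    G.modify I v b' z (Sum.inr ⟨w, a⟩) =
      if w.1 = v then
        (if a = (fun y => G.val I y.1) then b' else I (Sum.inr ⟨w, a⟩))
      else if G.child v w.1 then
        (if a = (fun y => if y.1 = v then b' else G.val I y.1) then G.val I w.1
         else if a = (fun y => G.val I y.1) then z
         else I (Sum.inr ⟨w, a⟩))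
      else I (Sum.inr ⟨w, a⟩) := rfl

theorem RootedDag.val_modify (G : RootedDag) {k : ℕ} (I : G.Var k → Fin k)
    (v : Fin G.n) (b' z : Fin k) :
    ∀ x, G.val (G.modify I v b' z) x = if x = v then b' else G.val I x := by
  classical
  intro x
  induction x using G.wf.induction with
  | _ x ih =>
  by_cases hleaf : G.IsLeaf x
  · rw [G.val_leaf _ hleaf, G.modify_inl]
    by_cases hxv : x = v
    · simp [hxv]
    · simp only [hxv, if_false]
      rw [G.val_leaf _ hleaf]
  · rw [G.val_internal _ hleaf, G.modify_inr]
    have htup : (fun (y : {y : Fin G.n // G.child y x}) => G.val (G.modify I v b' z) y.1)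
        = fun y => if y.1 = v then b' else G.val I y.1 := by
      funext y; exact ih y.1 y.2
    by_cases hxv : x = v
    · have htup' : (fun (y : {y : Fin G.n // G.child y x}) => G.val (G.modify I v b' z) y.1)
          = fun y => G.val I y.1 := by
        rw [htup]; funext y
        have hy : y.1 ≠ v := by
          intro h
          have hc := y.2
          rw [h.trans hxv.symm] at hc
          exact G.child_irrefl_s12 x hc
        simp [hy]
      rw [htup']
      simp [hxv]
    · rw [htup]
      by_cases hcv : G.child v x
      · simp [hxv, hcv]
      · have htup' : (fun (y : {y : Fin G.n // G.child y x}) =>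
            if y.1 = v then b' else G.val I y.1) = fun y => G.val I y.1 := by
          funext y
          have hy : y.1 ≠ v := fun h => hcv (h ▸ y.2)
          simp [hy]
        rw [htup']
        simp only [hxv, hcv, if_false]
        rw [G.val_internal _ hleaf]


theorem RootedDag.modify_mem (G : RootedDag) {k : ℕ} (hk : 0 < k)
    (I : G.Var k → Fin k) (hI : I ∈ G.HardInputs hk)
    (v : Fin G.n) (b' : Fin k) :
    G.modify I v b' ⟨0, hk⟩ ∈ G.HardInputs hk := by
  classical
  intro w a ha
  -- the thrifty tuple of w under the modified input
  have htup : (fun (y : {y : Fin G.n // G.child y w.1}) => G.val (G.modify I v b' ⟨0, hk⟩) y.1)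
      = fun y => if y.1 = v then b' else G.val I y.1 := by
    funext y; exact G.val_modify I v b' ⟨0, hk⟩ y.1
  rw [htup] at ha
  rw [G.modify_inr]
  by_cases hwv : w.1 = v
  · -- children of v are not v, so the modified thrifty tuple of v is the old one
    have htup' : (fun (y : {y : Fin G.n // G.child y w.1}) =>
        if y.1 = v then b' else G.val I y.1) = fun y => G.val I y.1 := by
      funext y
      have hy : y.1 ≠ v := by
        intro h
        have hc := y.2
        rw [h, hwv] at hc
        exact G.child_irrefl_s12 v hc
      simp [hy]
    rw [htup'] at ha
    simp only [hwv, if_true]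
    rw [if_neg ha]
    exact hI w a ha
  · simp only [hwv, if_false]
    by_cases hcv : G.child v w.1
    · simp only [hcv, if_true]
      rw [if_neg ha]
      by_cases hold : a = fun y => G.val I y.1
      · rw [if_pos hold]
      · rw [if_neg hold]
        exact hI w a hold
    · have htup' : (fun (y : {y : Fin G.n // G.child y w.1}) =>
          if y.1 = v then b' else G.val I y.1) = fun y => G.val I y.1 := by
        funext y
        have hy : y.1 ≠ v := fun h => hcv (h ▸ y.2)
        simp [hy]
      rw [htup'] at ha
      simp only [hcv, if_false]
      exact hI w a ha



theorem queries_children (G : RootedDag) (k : ℕ) (hk2 : 2 ≤ k)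
    (B : BP (G.Var k) k Bool) (hthrifty : G.Thrifty B)
    (I : G.Var k → Fin k) (hI : I ∈ G.HardInputs (Nat.zero_lt_two.trans_le hk2 : (0:ℕ) < k)) :
    ∀ t, B.VisitsAt I t → ∀ (u : Fin G.n) (hu : ¬ G.IsLeaf u),
      B.query (B.path I t) = Sum.inr ⟨⟨u, hu⟩, fun y => G.val I y.1⟩ →
      ∀ v, G.child v u → ∃ s < t, QueriesNode G B I (B.path I s) v := by
  classical
  have hk0 : 0 < k := by omega
  intro t
  induction t using Nat.strong_induction_on with
  | _ t IH =>
  intro hvis u hu hq v hv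
  by_contra hnot
  push_neg at hnot
  set b : Fin k := G.val I v with hb
  set b' : Fin k := if b.val = 0 then ⟨1, by omega⟩ else ⟨0, hk0⟩ with hb'
  have hbb : b' ≠ b := by
    intro hc
    by_cases h0 : b.val = 0
    · rw [hb', if_pos h0] at hc
      have := congrArg Fin.val hc
      simp only [h0] at this
      exact absurd this (by norm_num)
    · rw [hb', if_neg h0] at hc
      have := congrArg Fin.val hc
      simp only at this
      exact h0 this.symm
  set I' := G.modify I v b' ⟨0, hk0⟩ with hI'def
  have hI' : I' ∈ G.HardInputs hk0 := G.modify_mem hk0 I hI v b'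
  have hagree : ∀ s < t, I' (B.query (B.path I s)) = I (B.query (B.path I s)) := by
    intro s hs
    have hvs : B.VisitsAt I s := B.visitsAt_mono_s12 I hvis (le_of_lt hs)
    have hvisit : B.Visits I (B.path I s) := ⟨s, hvs, rfl⟩
    rcases hy : B.query (B.path I s) with l | wa
    · obtain ⟨lv, hl⟩ := l
      rw [hI'def, G.modify_inl]
      by_cases hlv : lv = v
      · subst hlv
        exact absurd (Or.inl ⟨hl, hy⟩) (hnot s hs)
      · rw [if_neg hlv]
    · obtain ⟨w, a⟩ := wa
      have ha : a = fun y => G.val I y.1 := by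
        funext y; exact hthrifty I (B.path I s) w a hvisit hy y
      obtain ⟨wv, hw2⟩ := w
      rw [hI'def, G.modify_inr]
      by_cases hwv : wv = v
      · exfalso
        subst hwv
        exact hnot s hs (Or.inr ⟨hw2, by rw [hy, ha]⟩)
      · simp only [hwv, if_false]
        by_cases hcv : G.child v wv
        · exfalso
          have hq' : B.query (B.path I s) = Sum.inr ⟨⟨wv, hw2⟩, fun y => G.val I y.1⟩ := by
            rw [hy, ha]
          obtain ⟨r, hrs, hqr⟩ := IH s hs hvs wv hw2 hq' v hcv
          exact hnot r (lt_trans hrs hs) hqr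
        · simp only [hcv, if_false]
  have hpath : ∀ s ≤ t, B.path I' s = B.path I s := B.path_eq_of_agree I I' t hagree
  have hvis' : B.VisitsAt I' t := by
    intro r hr
    rw [hpath r (le_of_lt hr)]
    exact hvis r hr
  have hvisit' : B.Visits I' (B.path I t) := ⟨t, hvis', hpath t le_rfl⟩
  have hth := hthrifty I' (B.path I t) ⟨u, hu⟩ (fun y => G.val I y.1) hvisit' hq ⟨v, hv⟩
  have hval' : G.val I' v = b' := by
    rw [hI'def, G.val_modify]
    simp
  exact hbb (hval' ▸ hth.symm)


theorem queries_thrifty (G : RootedDag) (k : ℕ) (hk2 : 2 ≤ k)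
    (B : BP (G.Var k) k Bool)
    (hsolve : G.SolvesDEOn (Nat.zero_lt_two.trans_le hk2) B (G.HardInputs (Nat.zero_lt_two.trans_le hk2)))
    (hthrifty : G.Thrifty B)
    (I : G.Var k → Fin k) (hI : I ∈ G.HardInputs (Nat.zero_lt_two.trans_le hk2 : (0:ℕ) < k)) :
    ∀ (u : Fin G.n) (hu : ¬ G.IsLeaf u),
      ∃ t, B.VisitsAt I t ∧
        B.query (B.path I t) = Sum.inr ⟨⟨u, hu⟩, fun y => G.val I y.1⟩ := by
  classical
  have hk0 : 0 < k := by omega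
  intro u
  induction u using (G.swap_wf).induction with
  | _ u IH =>
  intro hu
  by_cases hroot : u = G.root
  · -- the root case: flipping the root value must change the output
    subst hroot
    by_contra hnot
    set b : Fin k := G.val I G.root with hb
    set b' : Fin k := if b.val = 0 then ⟨1, by omega⟩ else ⟨0, hk0⟩ with hb'
    have hbb : decide (b' = ⟨0, hk0⟩) ≠ decide (b = ⟨0, hk0⟩) := by
      by_cases h0 : b.val = 0
      · have h1 : b = ⟨0, hk0⟩ := Fin.ext h0
        have h2 : b' = ⟨1, by omega⟩ := by rw [hb', if_pos h0]
        have h3 : b' ≠ ⟨0, hk0⟩ := by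
          rw [h2]; intro hc; exact absurd (congrArg Fin.val hc) (by norm_num)
        simp [h1, h3]
      · have h1 : b ≠ ⟨0, hk0⟩ := fun hc => h0 (congrArg Fin.val hc)
        have h2 : b' = ⟨0, hk0⟩ := by rw [hb', if_neg h0]
        simp [h1, h2]
    set I' := G.modify I G.root b' ⟨0, hk0⟩ with hI'def
    have hI' : I' ∈ G.HardInputs hk0 := G.modify_mem hk0 I hI G.root b'
    have hvalr : G.val I' G.root = b' := by rw [hI'def, G.val_modify]; simp
    have hagree : ∀ s, B.VisitsAt I s →
        I' (B.query (B.path I s)) = I (B.query (B.path I s)) := by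
      intro s hvs
      have hvisit : B.Visits I (B.path I s) := ⟨s, hvs, rfl⟩
      rcases hy : B.query (B.path I s) with l | wa
      · obtain ⟨lv, hl⟩ := l
        rw [hI'def, G.modify_inl]
        have hlv : lv ≠ G.root := by
          intro h; rw [h] at hl; exact hu hl
        rw [if_neg hlv]
      · obtain ⟨w, a⟩ := wa
        have ha : a = fun y => G.val I y.1 := by
          funext y; exact hthrifty I (B.path I s) w a hvisit hy y
        obtain ⟨wv, hw2⟩ := w
        rw [hI'def, G.modify_inr]
        by_cases hwv : wv = G.root
        · exfalso
          subst hwv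
          exact hnot ⟨s, hvs, by rw [hy, ha]⟩
        · simp only [hwv, if_false]
          have hcv : ¬ G.child G.root wv := G.root_no_parent wv
          simp only [hcv, if_false]
    obtain ⟨t, htv, hto⟩ := hsolve I hI
    obtain ⟨t', htv', hto'⟩ := hsolve I' hI'
    have hpath : ∀ s, B.VisitsAt I s → B.path I' s = B.path I s := by
      intro s hvs
      refine B.path_eq_of_agree I I' s (fun r hr => ?_) s le_rfl
      exact hagree r (B.visitsAt_mono_s12 I hvs (le_of_lt hr))
    rcases lt_trichotomy t t' with h | h | h
    · have h1 : B.out (B.path I' t) = none := htv' t h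
      rw [hpath t htv] at h1
      rw [hto] at h1
      exact Option.some_ne_none _ h1
    · subst h
      rw [hpath t htv, hto, hvalr] at hto'
      exact hbb (Option.some_injective _ hto').symm
    · have h1 : B.out (B.path I t') = none := htv t' h
      have h2 : B.path I' t' = B.path I t' :=
        hpath t' (B.visitsAt_mono_s12 I htv (le_of_lt h))
      rw [h2, h1] at hto'
      exact Option.some_ne_none _ hto'.symm
  · -- non-root: use the parent and `queries_children`
    obtain ⟨w, hw⟩ := G.root_unique u hroot
    have hwint : ¬ G.IsLeaf w := fun hl => hl u hw
    obtain ⟨t, htv, htq⟩ := IH w hw hwint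
    obtain ⟨s, hst, hqn⟩ :=
      queries_children G k hk2 B hthrifty I hI t htv w hwint htq u hw
    rcases hqn with ⟨h, _⟩ | ⟨h, heq⟩
    · exact absurd h hu
    · exact ⟨s, B.visitsAt_mono_s12 I htv (le_of_lt hst), heq⟩


/-- For a deterministic thrifty BP computing `DE^G_k` correctly on the hard inputs `D_{G,k}`:
for any `I ∈ D_{G,k}` and non-leaf node `u`, some state on `I`'s computation path queries the
thrifty `u`-variable of `I`, and for every such state, each child `v` of `u` has its
`v`-variable queried strictly earlier on `I`'s path. -/
theorem stmt12 (G : RootedDag) (k : ℕ) (hk : 2 ≤ k)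
    (B : BP (G.Var k) k Bool)
    (hsolve : G.SolvesDEOn (by omega) B (G.HardInputs (by omega)))
    (hthrifty : G.Thrifty B)
    (I : G.Var k → Fin k) (hI : I ∈ G.HardInputs (by omega : (0:ℕ) < k))
    (u : Fin G.n) (hu : ¬ G.IsLeaf u) :
    (∃ t, B.VisitsAt I t ∧
        B.query (B.path I t) = Sum.inr ⟨⟨u, hu⟩, fun v => G.val I v.1⟩) ∧
    (∀ t, B.VisitsAt I t →
        B.query (B.path I t) = Sum.inr ⟨⟨u, hu⟩, fun v => G.val I v.1⟩ →
        ∀ v : Fin G.n, G.child v u →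
          ∃ s < t, QueriesNode G B I (B.path I s) v) := by
  exact ⟨queries_thrifty G k hk B hsolve hthrifty I hI u hu,
    fun t ht hq v hv => queries_children G k hk B hthrifty I hI t ht u hu hq v hv⟩
end
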